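/- arXiv:1302.5732 — 3 statements merged into one kernel-verified Lean document; each statement's English description precedes it below -/
import Mathlib

section
/- Define the operator T₀ on L²([0,1], r dr) by (T₀f)(s) = −(1/s)∫₀^s f(r) r dr + (s/(1−s²)) ∫_s^1 f(r) r dr for 0 < s < 1. Then ∫₀¹ |(T₀f)(s)|² s ds ≤ (9/2) ∫₀¹ |f(r)|² r dr for all f ∈ L²([0,1], r dr). -/
open MeasureTheory Set

/-- The operator `T₀` of Lemma 3. -/
noncomputable def T0 (f : ℝ → ℂ) (s : ℝ) : ℂ :=
  -(1 / (s:ℂ)) * (∫ r in Set.Ioc (0:ℝ) s, f r * (r:ℂ)) +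
    ((s:ℂ) / (1 - (s:ℂ) ^ 2)) * ∫ r in Set.Ioc s 1, f r * (r:ℂ)

lemma my_cs {μ : Measure ℝ} {u v : ℝ → ℝ}
    (hum : AEStronglyMeasurable u μ) (hvm : AEStronglyMeasurable v μ)
    (hu : ∀ᵐ x ∂μ, 0 ≤ u x) (hv : ∀ᵐ x ∂μ, 0 ≤ v x)
    (hu2 : Integrable (fun x => u x ^ 2) μ) (hv2 : Integrable (fun x => v x ^ 2) μ) :
    (∫ x, u x * v x ∂μ) ^ 2 ≤ (∫ x, u x ^ 2 ∂μ) * (∫ x, v x ^ 2 ∂μ) := by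
  have hu2' : MemLp u 2 μ := (memLp_two_iff_integrable_sq hum).2 hu2
  have hv2' : MemLp v 2 μ := (memLp_two_iff_integrable_sq hvm).2 hv2
  have hconj : Real.HolderConjugate 2 2 := Real.HolderConjugate.two_two
  have h := integral_mul_le_Lp_mul_Lq_of_nonneg hconj hu hv
    (by simpa using hu2') (by simpa using hv2')
  have h1 : 0 ≤ ∫ x, u x ^ 2 ∂μ := integral_nonneg fun x => sq_nonneg _
  have h2 : 0 ≤ ∫ x, v x ^ 2 ∂μ := integral_nonneg fun x => sq_nonneg _
  have h0 : 0 ≤ ∫ x, u x * v x ∂μ := by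
    apply integral_nonneg_of_ae; filter_upwards [hu, hv] with x h h'; exact mul_nonneg h h'
  calc (∫ x, u x * v x ∂μ) ^ 2
      ≤ ((∫ x, u x ^ 2 ∂μ) ^ (1/2:ℝ) * (∫ x, v x ^ 2 ∂μ) ^ (1/2:ℝ)) ^ 2 := by
        apply pow_le_pow_left₀ h0
        simpa using h
    _ = (∫ x, u x ^ 2 ∂μ) * (∫ x, v x ^ 2 ∂μ) := by
        rw [mul_pow, ← Real.rpow_natCast (_ ^ (1/2:ℝ)) 2, ← Real.rpow_natCast (_ ^ (1/2:ℝ)) 2,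
          ← Real.rpow_mul h1, ← Real.rpow_mul h2]
        norm_num

lemma deriv_sqrt_one_sub_sq {x : ℝ} (hx : 0 < 1 - x ^ 2) :
    HasDerivAt (fun r : ℝ => Real.sqrt (1 - r ^ 2))
      (-x / Real.sqrt (1 - x ^ 2)) x := by
  have h1 : HasDerivAt (fun r : ℝ => 1 - r ^ 2) (-(2 * x)) x := by
    simpa using (hasDerivAt_pow 2 x).const_sub 1
  have h2 := (Real.hasDerivAt_sqrt hx.ne').comp x h1
  refine HasDerivAt.congr_deriv h2 ?_
  have hs : Real.sqrt (1 - x ^ 2) ≠ 0 := (Real.sqrt_pos.2 hx).ne'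
  field_simp

-- copy of int_v2 assumed above in final file

lemma int_v2 {s : ℝ} (hs : 0 ≤ s) :
    IntegrableOn (fun r => r / Real.sqrt (1 - r ^ 2)) (Set.Ioc s 1) := by
  rcases le_or_gt 1 s with h | h
  · rw [Set.Ioc_eq_empty (by exact not_lt.2 h)]
    simp
  have hdom : IntegrableOn (fun r : ℝ => (1 - r) ^ (-(1:ℝ)/2)) (Set.Ioc s 1) := by
    have h1 : IntervalIntegrable (fun x : ℝ => x ^ (-(1:ℝ)/2)) volume (1 - s) 0 :=
      intervalIntegral.intervalIntegrable_rpow' (by norm_num)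
    have h2 := h1.comp_sub_left 1
    rw [intervalIntegrable_iff_integrableOn_Ioc_of_le (by linarith)] at h2
    simpa using h2
  have hm : Measurable fun r : ℝ => r / Real.sqrt (1 - r ^ 2) :=
    measurable_id.div (Real.continuous_sqrt.measurable.comp
      (measurable_const.sub (measurable_id.pow_const 2)))
  apply hdom.mono' hm.aestronglyMeasurable
  · filter_upwards [ae_restrict_mem measurableSet_Ioc] with r hr
    have hr0 : 0 < r := lt_of_le_of_lt hs hr.1
    have hr1 : r ≤ 1 := hr.2
    have hfac : Real.sqrt (1 - r ^ 2) = Real.sqrt (1 - r) * Real.sqrt (1 + r) := by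
      rw [← Real.sqrt_mul (by linarith)]; ring_nf
    have hnn : 0 ≤ r / Real.sqrt (1 - r ^ 2) := by positivity
    rw [Real.norm_of_nonneg hnn, hfac, show (-(1:ℝ)/2 : ℝ) = -(1/2) by norm_num,
      Real.rpow_neg (by linarith), ← Real.sqrt_eq_rpow]
    rcases eq_or_lt_of_le hr1 with he | hlt
    · simp [← he]
    · have h1r : 0 < Real.sqrt (1 - r) := Real.sqrt_pos.2 (by linarith)
      have h2r : 0 < Real.sqrt (1 + r) := Real.sqrt_pos.2 (by linarith)
      rw [div_le_iff₀ (by positivity), ← mul_assoc, inv_mul_cancel₀ h1r.ne', one_mul]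
      nlinarith [Real.sq_sqrt (show (0:ℝ) ≤ 1 + r by linarith),
        Real.sqrt_nonneg (1 + r)]

lemma ftc1 {s : ℝ} (hs : 0 ≤ s) : ∫ r in Set.Ioc 0 s, (r:ℝ) = s ^ 2 / 2 := by
  rw [← intervalIntegral.integral_of_le hs, integral_id]; ring

lemma ftc2 {s : ℝ} (hs0 : 0 ≤ s) (hs1 : s ≤ 1) :
    ∫ r in Set.Ioc s 1, r / Real.sqrt (1 - r ^ 2) = Real.sqrt (1 - s ^ 2) := by
  have hint : IntervalIntegrable (fun r => r / Real.sqrt (1 - r ^ 2)) volume s 1 := by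
    rw [intervalIntegrable_iff_integrableOn_Ioc_of_le hs1]
    exact int_v2 hs0
  have h := intervalIntegral.integral_eq_sub_of_hasDeriv_right_of_le hs1
    (f := fun r => -Real.sqrt (1 - r ^ 2)) (f' := fun r => r / Real.sqrt (1 - r ^ 2))
    (by fun_prop)
    (fun x hx => by
      have hx2 : 0 < 1 - x ^ 2 := by nlinarith [hx.1, hx.2, lt_of_le_of_lt hs0 hx.1]
      have := (deriv_sqrt_one_sub_sq hx2).neg
      have h2 : -(-x / Real.sqrt (1 - x ^ 2)) = x / Real.sqrt (1 - x ^ 2) := by ring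
      exact (h2 ▸ this).hasDerivWithinAt) hint
  rw [← intervalIntegral.integral_of_le hs1, h]
  norm_num

lemma ftc3 {r : ℝ} (hr0 : 0 ≤ r) (hr1 : r < 1) :
    ∫ s in Set.Ioc 0 r, s ^ 3 / ((1 - s ^ 2) * Real.sqrt (1 - s ^ 2))
      = 1 / Real.sqrt (1 - r ^ 2) + Real.sqrt (1 - r ^ 2) - 2 := by
  have key : ∀ x ∈ Set.uIcc (0:ℝ) r,
      HasDerivAt (fun y : ℝ => 1 / Real.sqrt (1 - y ^ 2) + Real.sqrt (1 - y ^ 2))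
        (x ^ 3 / ((1 - x ^ 2) * Real.sqrt (1 - x ^ 2))) x := by
    intro x hx
    rw [Set.uIcc_of_le hr0] at hx
    have hx2 : 0 < 1 - x ^ 2 := by nlinarith [hx.1, hx.2]
    have hsp : 0 < Real.sqrt (1 - x ^ 2) := Real.sqrt_pos.2 hx2
    have hsq : Real.sqrt (1 - x ^ 2) ^ 2 = 1 - x ^ 2 := Real.sq_sqrt hx2.le
    have h1 := deriv_sqrt_one_sub_sq hx2
    have h2 := ((h1.inv hsp.ne').const_mul 1).add h1
    refine HasDerivAt.congr_deriv h2 ?_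
    field_simp
    rw [hsq]; ring
  have hcont : ContinuousOn (fun s : ℝ => s ^ 3 / ((1 - s ^ 2) * Real.sqrt (1 - s ^ 2)))
      (Set.uIcc 0 r) := by
    apply ContinuousOn.div (by fun_prop) (by fun_prop)
    intro x hx
    rw [Set.uIcc_of_le hr0] at hx
    have hx2 : 0 < 1 - x ^ 2 := by nlinarith [hx.1, hx.2]
    have hsp : 0 < Real.sqrt (1 - x ^ 2) := Real.sqrt_pos.2 hx2
    positivity
  have h := intervalIntegral.integral_eq_sub_of_hasDerivAt key
    (hcont.intervalIntegrable)
  rw [← intervalIntegral.integral_of_le hr0, h]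
  norm_num

lemma phi_int (f : ℝ → ℂ)
    (hf : IntegrableOn (fun r : ℝ => ‖f r‖ ^ 2 * r) (Set.Ioc (0:ℝ) 1)) :
    IntegrableOn (fun r : ℝ => ‖f r‖ ^ 2 * r * Real.sqrt (1 - r ^ 2))
      (Set.Ioc (0:ℝ) 1) := by
  apply hf.mono' (hf.1.mul (Real.continuous_sqrt.comp
    (continuous_const.sub (continuous_pow 2))).aestronglyMeasurable)
  filter_upwards [ae_restrict_mem measurableSet_Ioc] with r hr
  have h0 : (0:ℝ) < r := hr.1
  have h1 : Real.sqrt (1 - r ^ 2) ≤ 1 := Real.sqrt_le_one.2 (by nlinarith [hr.2])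
  have h2 : 0 ≤ Real.sqrt (1 - r ^ 2) := Real.sqrt_nonneg _
  simp only [Pi.mul_apply, Function.comp_apply]
  rw [Real.norm_of_nonneg (by positivity)]
  have h3 : ‖f r‖ ^ 2 * r * Real.sqrt (1 - r ^ 2) ≤ ‖f r‖ ^ 2 * r * 1 :=
    mul_le_mul_of_nonneg_left h1 (by positivity)
  simpa using h3

lemma ae_ne_one (s : Set ℝ) :
    ∀ᵐ r ∂((volume : Measure ℝ).restrict s), r ≠ 1 := by
  apply ae_restrict_of_ae
  rw [ae_iff]
  have : {a : ℝ | ¬ a ≠ 1} = {1} := by ext a; simp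
  rw [this]
  exact Real.volume_singleton

lemma pointwise_bound (f : ℝ → ℂ)
    (hfm : AEStronglyMeasurable f (volume.restrict (Set.Ioc (0:ℝ) 1)))
    (hf : IntegrableOn (fun r : ℝ => ‖f r‖ ^ 2 * r) (Set.Ioc (0:ℝ) 1))
    {s : ℝ} (hs0 : 0 < s) (hs1 : s < 1) :
    ‖T0 f s‖ ^ 2 * s ≤ (∫ r in Set.Ioc (0:ℝ) 1, ‖f r‖ ^ 2 * r) * s
      + 2 * (s ^ 3 / ((1 - s ^ 2) * Real.sqrt (1 - s ^ 2))
          * ∫ r in Set.Ioc s 1, ‖f r‖ ^ 2 * r * Real.sqrt (1 - r ^ 2)) := by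
  set I := ∫ r in Set.Ioc (0:ℝ) 1, ‖f r‖ ^ 2 * r with hIdef
  set G := ∫ r in Set.Ioc s 1, ‖f r‖ ^ 2 * r * Real.sqrt (1 - r ^ 2) with hGdef
  set X := ∫ r in Set.Ioc (0:ℝ) s, f r * (r:ℂ) with hXdef
  set Y := ∫ r in Set.Ioc s 1, f r * (r:ℂ) with hYdef
  have h1s : (0:ℝ) < 1 - s ^ 2 := by nlinarith
  set t := Real.sqrt (1 - s ^ 2) with htdef
  have ht : 0 < t := Real.sqrt_pos.2 h1s
  have ht2 : t ^ 2 = 1 - s ^ 2 := Real.sq_sqrt h1s.le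
  have hI0 : 0 ≤ I := setIntegral_nonneg measurableSet_Ioc
    (fun r hr => by have := hr.1; positivity)
  have hGnn : 0 ≤ G := setIntegral_nonneg measurableSet_Ioc
    (fun r hr => by have h0 : (0:ℝ) < r := lt_trans hs0 hr.1; positivity)
  -- bound on X
  have hsub : Set.Ioc (0:ℝ) s ⊆ Set.Ioc (0:ℝ) 1 := Set.Ioc_subset_Ioc_right hs1.le
  have hfm_s : AEStronglyMeasurable f (volume.restrict (Set.Ioc (0:ℝ) s)) :=
    hfm.mono_measure (Measure.restrict_mono hsub le_rfl)
  have hX2 : ‖X‖ ^ 2 ≤ I * (s ^ 2 / 2) := by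
    have hnormle : ‖X‖ ≤ ∫ r in Set.Ioc (0:ℝ) s,
        (‖f r‖ * Real.sqrt r) * Real.sqrt r := by
      refine (norm_integral_le_integral_norm _).trans_eq ?_
      refine integral_congr_ae ?_
      filter_upwards [ae_restrict_mem measurableSet_Ioc] with r hr
      rw [norm_mul, Complex.norm_real, Real.norm_of_nonneg hr.1.le,
        mul_assoc, Real.mul_self_sqrt hr.1.le]
    have hu2 : Integrable (fun r => (‖f r‖ * Real.sqrt r) ^ 2)
        (volume.restrict (Set.Ioc (0:ℝ) s)) := by
      apply (hf.mono_set hsub).congr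
      filter_upwards [ae_restrict_mem measurableSet_Ioc] with r hr
      rw [mul_pow, Real.sq_sqrt hr.1.le]
    have hv2 : Integrable (fun r => Real.sqrt r ^ 2)
        (volume.restrict (Set.Ioc (0:ℝ) s)) := by
      apply (Continuous.integrableOn_Ioc continuous_id).congr
      filter_upwards [ae_restrict_mem measurableSet_Ioc] with r hr
      rw [Real.sq_sqrt hr.1.le]
      rfl
    have hcs := my_cs (u := fun r => ‖f r‖ * Real.sqrt r) (v := fun r => Real.sqrt r)
      (hfm_s.norm.mul Real.continuous_sqrt.aestronglyMeasurable)
      Real.continuous_sqrt.aestronglyMeasurable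
      (Filter.Eventually.of_forall fun r => by
        show (0:ℝ) ≤ ‖f r‖ * Real.sqrt r
        positivity)
      (Filter.Eventually.of_forall fun r => Real.sqrt_nonneg r) hu2 hv2
    have e1 : ∫ r in Set.Ioc (0:ℝ) s, (‖f r‖ * Real.sqrt r) ^ 2
        = ∫ r in Set.Ioc (0:ℝ) s, ‖f r‖ ^ 2 * r := by
      refine integral_congr_ae ?_
      filter_upwards [ae_restrict_mem measurableSet_Ioc] with r hr
      rw [mul_pow, Real.sq_sqrt hr.1.le]
    have e2 : ∫ r in Set.Ioc (0:ℝ) s, Real.sqrt r ^ 2 = s ^ 2 / 2 := by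
      rw [← ftc1 hs0.le]
      refine integral_congr_ae ?_
      filter_upwards [ae_restrict_mem measurableSet_Ioc] with r hr
      rw [Real.sq_sqrt hr.1.le]
    have e3 : ∫ r in Set.Ioc (0:ℝ) s, ‖f r‖ ^ 2 * r ≤ I := by
      refine setIntegral_mono_set hf ?_ hsub.eventuallyLE
      filter_upwards [ae_restrict_mem measurableSet_Ioc] with r hr
      have := hr.1; positivity
    calc ‖X‖ ^ 2 ≤ (∫ r in Set.Ioc (0:ℝ) s, (‖f r‖ * Real.sqrt r) * Real.sqrt r) ^ 2 :=
          pow_le_pow_left₀ (norm_nonneg _) hnormle 2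
      _ ≤ (∫ r in Set.Ioc (0:ℝ) s, (‖f r‖ * Real.sqrt r) ^ 2)
            * ∫ r in Set.Ioc (0:ℝ) s, Real.sqrt r ^ 2 := hcs
      _ ≤ I * (s ^ 2 / 2) := by
          rw [e1, e2]
          exact mul_le_mul_of_nonneg_right e3 (by positivity)
  -- bound on Y
  have hsub2 : Set.Ioc s 1 ⊆ Set.Ioc (0:ℝ) 1 := Set.Ioc_subset_Ioc_left hs0.le
  have hfm_t : AEStronglyMeasurable f (volume.restrict (Set.Ioc s 1)) :=
    hfm.mono_measure (Measure.restrict_mono hsub2 le_rfl)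
  have hY2 : ‖Y‖ ^ 2 ≤ G * t := by
    set u : ℝ → ℝ := fun r => ‖f r‖ * Real.sqrt (Real.sqrt (1 - r ^ 2)) * Real.sqrt r
      with hudef
    set v : ℝ → ℝ := fun r => Real.sqrt r / Real.sqrt (Real.sqrt (1 - r ^ 2)) with hvdef
    have humeas : AEStronglyMeasurable u (volume.restrict (Set.Ioc s 1)) :=
      (hfm_t.norm.mul ((Real.continuous_sqrt.comp (Real.continuous_sqrt.comp
        (continuous_const.sub (continuous_pow 2)))).aestronglyMeasurable)).mul
        Real.continuous_sqrt.aestronglyMeasurable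
    have hqmeas : Measurable fun r : ℝ => Real.sqrt (Real.sqrt (1 - r ^ 2)) :=
      Real.continuous_sqrt.measurable.comp (Real.continuous_sqrt.measurable.comp
        (measurable_const.sub (measurable_id.pow_const 2)))
    have hvmeas : AEStronglyMeasurable v (volume.restrict (Set.Ioc s 1)) :=
      (Real.continuous_sqrt.measurable.div hqmeas).aestronglyMeasurable
    have hnormle : ‖Y‖ ≤ ∫ r in Set.Ioc s 1, u r * v r := by
      refine (norm_integral_le_integral_norm _).trans_eq ?_
      refine integral_congr_ae ?_
      filter_upwards [ae_restrict_mem measurableSet_Ioc, ae_ne_one (Set.Ioc s 1)]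
        with r hr hne
      have hr0 : (0:ℝ) < r := lt_trans hs0 hr.1
      have hr1 : r < 1 := lt_of_le_of_ne hr.2 hne
      have hq : 0 < Real.sqrt (Real.sqrt (1 - r ^ 2)) :=
        Real.sqrt_pos.2 (Real.sqrt_pos.2 (by nlinarith))
      rw [norm_mul, Complex.norm_real, Real.norm_of_nonneg hr0.le]
      rw [hudef, hvdef]
      have : ‖f r‖ * Real.sqrt (Real.sqrt (1 - r ^ 2)) * Real.sqrt r
          * (Real.sqrt r / Real.sqrt (Real.sqrt (1 - r ^ 2)))
          = ‖f r‖ * (Real.sqrt r * Real.sqrt r)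
            * (Real.sqrt (Real.sqrt (1 - r ^ 2)) / Real.sqrt (Real.sqrt (1 - r ^ 2))) := by
        ring
      have hone : Real.sqrt (Real.sqrt (1 - r ^ 2)) / Real.sqrt (Real.sqrt (1 - r ^ 2))
          = 1 := by field_simp
      rw [this, hone, Real.mul_self_sqrt hr0.le, mul_one]
    have hu2 : Integrable (fun r => u r ^ 2) (volume.restrict (Set.Ioc s 1)) := by
      apply ((phi_int f hf).mono_set hsub2).congr
      filter_upwards [ae_restrict_mem measurableSet_Ioc] with r hr
      have hr0 : (0:ℝ) < r := lt_trans hs0 hr.1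
      rw [hudef]
      simp only
      rw [mul_pow, mul_pow, Real.sq_sqrt (Real.sqrt_nonneg _), Real.sq_sqrt hr0.le]
      ring
    have hv2 : Integrable (fun r => v r ^ 2) (volume.restrict (Set.Ioc s 1)) := by
      apply (int_v2 hs0.le).congr
      filter_upwards [ae_restrict_mem measurableSet_Ioc] with r hr
      have hr0 : (0:ℝ) < r := lt_trans hs0 hr.1
      rw [hvdef]
      simp only
      rw [div_pow, Real.sq_sqrt (Real.sqrt_nonneg _), Real.sq_sqrt hr0.le]
    have hcs := my_cs humeas hvmeas
      (Filter.Eventually.of_forall fun r => by rw [hudef]; positivity)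
      (Filter.Eventually.of_forall fun r => by rw [hvdef]; positivity) hu2 hv2
    have e1 : ∫ r in Set.Ioc s 1, u r ^ 2 = G := by
      refine integral_congr_ae ?_
      filter_upwards [ae_restrict_mem measurableSet_Ioc] with r hr
      have hr0 : (0:ℝ) < r := lt_trans hs0 hr.1
      rw [hudef]
      simp only
      rw [mul_pow, mul_pow, Real.sq_sqrt (Real.sqrt_nonneg _), Real.sq_sqrt hr0.le]
      ring
    have e2 : ∫ r in Set.Ioc s 1, v r ^ 2 = t := by
      rw [htdef, ← ftc2 hs0.le hs1.le]
      refine integral_congr_ae ?_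
      filter_upwards [ae_restrict_mem measurableSet_Ioc] with r hr
      have hr0 : (0:ℝ) < r := lt_trans hs0 hr.1
      rw [hvdef]
      simp only
      rw [div_pow, Real.sq_sqrt (Real.sqrt_nonneg _), Real.sq_sqrt hr0.le]
    calc ‖Y‖ ^ 2 ≤ (∫ r in Set.Ioc s 1, u r * v r) ^ 2 :=
          pow_le_pow_left₀ (norm_nonneg _) hnormle 2
      _ ≤ (∫ r in Set.Ioc s 1, u r ^ 2) * ∫ r in Set.Ioc s 1, v r ^ 2 := hcs
      _ = G * t := by rw [e1, e2]
  -- coefficients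
  have hcoef1 : ‖-(1 / (s:ℂ))‖ = 1 / s := by
    rw [norm_neg, norm_div, norm_one, Complex.norm_real, Real.norm_of_nonneg hs0.le]
  have hcoef2 : ‖(s:ℂ) / (1 - (s:ℂ) ^ 2)‖ = s / (1 - s ^ 2) := by
    have : (1 - (s:ℂ) ^ 2) = ((1 - s ^ 2 : ℝ) : ℂ) := by push_cast; ring
    rw [this, norm_div, Complex.norm_real, Complex.norm_real,
      Real.norm_of_nonneg hs0.le, Real.norm_of_nonneg h1s.le]
  have hT : ‖T0 f s‖ ≤ 1 / s * ‖X‖ + s / (1 - s ^ 2) * ‖Y‖ := by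
    rw [T0, ← hXdef, ← hYdef]
    refine (norm_add_le _ _).trans ?_
    rw [norm_mul, norm_mul, hcoef1, hcoef2]
  have haa : (1 / s * ‖X‖) ^ 2 ≤ I / 2 := by
    rw [mul_pow]
    calc (1 / s) ^ 2 * ‖X‖ ^ 2 ≤ (1 / s) ^ 2 * (I * (s ^ 2 / 2)) := by
          exact mul_le_mul_of_nonneg_left hX2 (by positivity)
      _ = I / 2 := by field_simp
  have hbb : (s / (1 - s ^ 2) * ‖Y‖) ^ 2 ≤ s ^ 2 / ((1 - s ^ 2) * t) * G := by
    rw [mul_pow]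
    calc (s / (1 - s ^ 2)) ^ 2 * ‖Y‖ ^ 2
        ≤ (s / (1 - s ^ 2)) ^ 2 * (G * t) := by
          exact mul_le_mul_of_nonneg_left hY2 (by positivity)
      _ = s ^ 2 / ((1 - s ^ 2) * t) * G := by
          rw [div_pow, div_mul_eq_mul_div, div_mul_eq_mul_div, div_eq_div_iff
            (by positivity) (by positivity)]
          linear_combination (s ^ 2 * G * (1 - s ^ 2)) * ht2
  have hsq : ‖T0 f s‖ ^ 2 ≤ 2 * (1 / s * ‖X‖) ^ 2 + 2 * (s / (1 - s ^ 2) * ‖Y‖) ^ 2 := by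
    have ha : 0 ≤ 1 / s * ‖X‖ := by positivity
    have hb : 0 ≤ s / (1 - s ^ 2) * ‖Y‖ := by positivity
    nlinarith [sq_nonneg (1 / s * ‖X‖ - s / (1 - s ^ 2) * ‖Y‖), norm_nonneg (T0 f s)]
  have hfinal : ‖T0 f s‖ ^ 2 ≤ I + 2 * (s ^ 2 / ((1 - s ^ 2) * t) * G) := by
    nlinarith [hsq, haa, hbb]
  calc ‖T0 f s‖ ^ 2 * s ≤ (I + 2 * (s ^ 2 / ((1 - s ^ 2) * t) * G)) * s :=
        mul_le_mul_of_nonneg_right hfinal hs0.le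
    _ = I * s + 2 * (s ^ 3 / ((1 - s ^ 2) * t) * G) := by
        field_simp

lemma fubini_part (f : ℝ → ℂ)
    (hf : IntegrableOn (fun r : ℝ => ‖f r‖ ^ 2 * r) (Set.Ioc (0:ℝ) 1)) :
    Integrable (fun s : ℝ => s ^ 3 / ((1 - s ^ 2) * Real.sqrt (1 - s ^ 2))
        * ∫ r in Set.Ioc s 1, ‖f r‖ ^ 2 * r * Real.sqrt (1 - r ^ 2))
      (volume.restrict (Set.Ioc (0:ℝ) 1)) ∧
    (∫ s in Set.Ioc (0:ℝ) 1, (s ^ 3 / ((1 - s ^ 2) * Real.sqrt (1 - s ^ 2))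
        * ∫ r in Set.Ioc s 1, ‖f r‖ ^ 2 * r * Real.sqrt (1 - r ^ 2)))
      ≤ ∫ r in Set.Ioc (0:ℝ) 1, ‖f r‖ ^ 2 * r := by
  set μ := (volume : Measure ℝ).restrict (Set.Ioc (0:ℝ) 1) with hμdef
  set ψ : ℝ → ℝ := fun s => s ^ 3 / ((1 - s ^ 2) * Real.sqrt (1 - s ^ 2)) with hψdef
  set φ : ℝ → ℝ := fun r => ‖f r‖ ^ 2 * r * Real.sqrt (1 - r ^ 2) with hφdef
  set F2 : ℝ × ℝ → ℝ :=
    fun p => Set.indicator {q : ℝ × ℝ | q.1 < q.2} (fun q => ψ q.1 * φ q.2) p with hF2def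
  have hψm : Measurable ψ :=
    (measurable_id.pow_const 3).div ((measurable_const.sub (measurable_id.pow_const 2)).mul
      (Real.continuous_sqrt.measurable.comp (measurable_const.sub (measurable_id.pow_const 2))))
  have hψnn : ∀ s ∈ Set.Ioc (0:ℝ) 1, 0 ≤ ψ s := by
    intro s hs
    have h1 : (0:ℝ) ≤ 1 - s ^ 2 := by nlinarith [hs.1, hs.2]
    have := hs.1
    rw [hψdef]
    positivity
  have hφnn : ∀ r ∈ Set.Ioc (0:ℝ) 1, 0 ≤ φ r := by
    intro r hr
    have := hr.1
    rw [hφdef]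
    positivity
  have hφaesm : AEStronglyMeasurable φ μ := (phi_int f hf).1
  have hsetm : MeasurableSet {q : ℝ × ℝ | q.1 < q.2} :=
    measurableSet_lt measurable_fst measurable_snd
  have hF2m : AEStronglyMeasurable F2 (μ.prod μ) :=
    (((hψm.comp measurable_fst).aestronglyMeasurable).mul hφaesm.comp_snd).indicator hsetm
  -- value of the s-section for fixed r
  have hsec_fun : ∀ r : ℝ, (fun s => F2 (s, r))
      = Set.indicator (Set.Iio r) (fun s => ψ s * φ r) := by
    intro r
    funext s
    by_cases h : s < r <;> simp [hF2def, Set.indicator, h]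
  have hψ_int_Ioo : ∀ {r : ℝ}, r < 1 → IntegrableOn ψ (Set.Ioo 0 r) volume := by
    intro r hr1
    rcases le_or_gt r 0 with h | h
    · rw [Set.Ioo_eq_empty (not_lt.2 h)]
      exact integrableOn_empty
    · have hcont : ContinuousOn ψ (Set.Icc 0 r) := by
        apply ContinuousOn.div (by fun_prop) (by fun_prop)
        intro x hx
        have hx2 : 0 < 1 - x ^ 2 := by nlinarith [hx.1, hx.2]
        have hsp : 0 < Real.sqrt (1 - x ^ 2) := Real.sqrt_pos.2 hx2
        positivity
      exact (hcont.integrableOn_Icc).mono_set Set.Ioo_subset_Icc_self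
  have hIio_inter : ∀ {r : ℝ}, r ≤ 1 → Set.Iio r ∩ Set.Ioc (0:ℝ) 1 = Set.Ioo 0 r := by
    intro r hr1
    ext x
    simp only [Set.mem_inter_iff, Set.mem_Iio, Set.mem_Ioc, Set.mem_Ioo]
    constructor
    · rintro ⟨h1, h2, h3⟩; exact ⟨h2, h1⟩
    · rintro ⟨h1, h2⟩; exact ⟨h2, h1, le_trans (le_of_lt h2) hr1⟩
  have hsec_int : ∀ {r : ℝ}, 0 < r → r < 1 → Integrable (fun s => F2 (s, r)) μ := by
    intro r hr0 hr1
    rw [hsec_fun r]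
    apply MeasureTheory.IntegrableOn.integrable_indicator _ measurableSet_Iio
    rw [IntegrableOn, hμdef, Measure.restrict_restrict measurableSet_Iio,
      hIio_inter hr1.le]
    exact (hψ_int_Ioo hr1).mul_const _
  have hsec_val : ∀ {r : ℝ}, 0 < r → r < 1 → (∫ s, F2 (s, r) ∂μ)
      = (1 / Real.sqrt (1 - r ^ 2) + Real.sqrt (1 - r ^ 2) - 2) * φ r := by
    intro r hr0 hr1
    rw [hsec_fun r, integral_indicator measurableSet_Iio, hμdef,
      Measure.restrict_restrict measurableSet_Iio, hIio_inter hr1.le,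
      ← integral_Ioc_eq_integral_Ioo, integral_mul_const, ftc3 hr0.le hr1]
  have hval_le : ∀ {r : ℝ}, 0 < r → r < 1 →
      (1 / Real.sqrt (1 - r ^ 2) + Real.sqrt (1 - r ^ 2) - 2) * φ r ≤ ‖f r‖ ^ 2 * r
      ∧ 0 ≤ (1 / Real.sqrt (1 - r ^ 2) + Real.sqrt (1 - r ^ 2) - 2) * φ r := by
    intro r hr0 hr1
    have h2 : (0:ℝ) < 1 - r ^ 2 := by nlinarith
    set x := Real.sqrt (1 - r ^ 2) with hxdef
    have hx : 0 < x := Real.sqrt_pos.2 h2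
    have hx2 : x ^ 2 = 1 - r ^ 2 := Real.sq_sqrt h2.le
    have hx1 : x ≤ 1 := Real.sqrt_le_one.2 (by nlinarith)
    have hW : x * (1 / x + x - 2) = (1 - x) ^ 2 := by
      field_simp
      ring
    have hW0 : 0 ≤ 1 / x + x - 2 := by nlinarith [sq_nonneg (1 - x)]
    have hphi : φ r = (‖f r‖ ^ 2 * r) * x := by rw [hφdef]
    constructor
    · rw [hphi]
      have key : (1 / x + x - 2) * x ≤ 1 := by nlinarith [sq_nonneg (1 - x)]
      calc (1 / x + x - 2) * ((‖f r‖ ^ 2 * r) * x)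
          = ((1 / x + x - 2) * x) * (‖f r‖ ^ 2 * r) := by ring
        _ ≤ 1 * (‖f r‖ ^ 2 * r) := by
            apply mul_le_mul_of_nonneg_right key (by positivity)
        _ = ‖f r‖ ^ 2 * r := one_mul _
    · rw [hphi]
      have : (0:ℝ) ≤ ‖f r‖ ^ 2 * r := by positivity
      positivity
  -- integrability of the uncurried function
  have hnorm_eq : ∀ᵐ r ∂μ, (∫ s, ‖F2 (s, r)‖ ∂μ) = ∫ s, F2 (s, r) ∂μ := by
    filter_upwards [ae_restrict_mem measurableSet_Ioc] with r hr
    refine integral_congr_ae ?_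
    filter_upwards [ae_restrict_mem measurableSet_Ioc] with s hs
    have hnn : 0 ≤ F2 (s, r) := by
      by_cases h : s < r
      · have := mul_nonneg (hψnn s hs) (hφnn r hr)
        simpa [hF2def, Set.indicator, h] using this
      · simp [hF2def, Set.indicator, h]
    rw [Real.norm_of_nonneg hnn]
  have hnormint : Integrable (fun r => ∫ s, ‖F2 (s, r)‖ ∂μ) μ := by
    refine Integrable.mono' hf ?_ ?_
    · exact hF2m.norm.prod_swap.integral_prod_right'
    filter_upwards [ae_restrict_mem measurableSet_Ioc, ae_ne_one _, hnorm_eq]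
      with r hr hne heq
    have hr1 : r < 1 := lt_of_le_of_ne hr.2 hne
    rw [Real.norm_of_nonneg (integral_nonneg fun s => norm_nonneg _), heq,
      hsec_val hr.1 hr1]
    exact (hval_le hr.1 hr1).1
  have hsec_ae : ∀ᵐ r ∂μ, Integrable (fun s => F2 (s, r)) μ := by
    filter_upwards [ae_restrict_mem measurableSet_Ioc, ae_ne_one _] with r hr hne
    exact hsec_int hr.1 (lt_of_le_of_ne hr.2 hne)
  have hint2 : Integrable F2 (μ.prod μ) := (integrable_prod_iff' hF2m).2 ⟨hsec_ae, hnormint⟩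
  have hinner : ∀ᵐ s ∂μ, (∫ r, F2 (s, r) ∂μ) = ψ s * ∫ r in Set.Ioc s 1, φ r := by
    filter_upwards [ae_restrict_mem measurableSet_Ioc] with s hs
    have hfun : (fun r => F2 (s, r)) = Set.indicator (Set.Ioi s) (fun r => ψ s * φ r) := by
      funext r
      by_cases h : s < r <;> simp [hF2def, Set.indicator, h, Set.mem_Ioi]
    have hinter : Set.Ioi s ∩ Set.Ioc (0:ℝ) 1 = Set.Ioc s 1 := by
      ext x
      simp only [Set.mem_inter_iff, Set.mem_Ioi, Set.mem_Ioc]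
      constructor
      · rintro ⟨h1, h2, h3⟩; exact ⟨h1, h3⟩
      · rintro ⟨h1, h2⟩; exact ⟨h1, lt_trans hs.1 h1, h2⟩
    rw [hfun, integral_indicator measurableSet_Ioi, hμdef,
      Measure.restrict_restrict measurableSet_Ioi, hinter, integral_const_mul]
  constructor
  · exact (hint2.integral_prod_left).congr hinner
  · have h1 : (∫ s, (ψ s * ∫ r in Set.Ioc s 1, φ r) ∂μ)
        = ∫ r, (∫ s, F2 (s, r) ∂μ) ∂μ := by
      rw [← MeasureTheory.integral_integral_swap (f := fun s r => F2 (s, r)) hint2]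
      exact integral_congr_ae (hinner.mono fun s h => h.symm)
    show (∫ s, (ψ s * ∫ r in Set.Ioc s 1, φ r) ∂μ) ≤ ∫ r, ‖f r‖ ^ 2 * r ∂μ
    rw [h1]
    apply integral_mono_ae (hint2.integral_prod_right) hf
    filter_upwards [ae_restrict_mem measurableSet_Ioc, ae_ne_one _] with r hr hne
    have hr1 : r < 1 := lt_of_le_of_ne hr.2 hne
    rw [hsec_val hr.1 hr1]
    exact (hval_le hr.1 hr1).1

/-- `T₀` is bounded on `L²([0,1], r dr)` with `‖T₀ f‖² ≤ (9/2) ‖f‖²`. -/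
theorem T0_bounded (f : ℝ → ℂ)
    (hfm : AEStronglyMeasurable f (volume.restrict (Set.Ioc (0:ℝ) 1)))
    (hf : IntegrableOn (fun r : ℝ => ‖f r‖ ^ 2 * r) (Set.Ioc (0:ℝ) 1)) :
    (∫ s in Set.Ioc (0:ℝ) 1, ‖T0 f s‖ ^ 2 * s)
      ≤ (9 / 2) * ∫ r in Set.Ioc (0:ℝ) 1, ‖f r‖ ^ 2 * r := by
  have hI0 : 0 ≤ ∫ r in Set.Ioc (0:ℝ) 1, ‖f r‖ ^ 2 * r :=
    setIntegral_nonneg measurableSet_Ioc fun r hr => by have := hr.1; positivity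
  by_cases hTi : IntegrableOn (fun s => ‖T0 f s‖ ^ 2 * s) (Set.Ioc (0:ℝ) 1)
  · obtain ⟨hψG_int, hψG_le⟩ := fubini_part f hf
    have hs_int : IntegrableOn (fun s : ℝ => s) (Set.Ioc (0:ℝ) 1) :=
      Continuous.integrableOn_Ioc continuous_id
    have hRHS_int : Integrable (fun s : ℝ =>
        (∫ r in Set.Ioc (0:ℝ) 1, ‖f r‖ ^ 2 * r) * s
          + 2 * (s ^ 3 / ((1 - s ^ 2) * Real.sqrt (1 - s ^ 2))
            * ∫ r in Set.Ioc s 1, ‖f r‖ ^ 2 * r * Real.sqrt (1 - r ^ 2)))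
        (volume.restrict (Set.Ioc (0:ℝ) 1)) :=
      (hs_int.const_mul _).add (hψG_int.const_mul 2)
    have hmono : (∫ s in Set.Ioc (0:ℝ) 1, ‖T0 f s‖ ^ 2 * s)
        ≤ ∫ s in Set.Ioc (0:ℝ) 1,
            ((∫ r in Set.Ioc (0:ℝ) 1, ‖f r‖ ^ 2 * r) * s
              + 2 * (s ^ 3 / ((1 - s ^ 2) * Real.sqrt (1 - s ^ 2))
                * ∫ r in Set.Ioc s 1, ‖f r‖ ^ 2 * r * Real.sqrt (1 - r ^ 2))) := by
      apply integral_mono_ae hTi hRHS_int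
      filter_upwards [ae_restrict_mem measurableSet_Ioc, ae_ne_one (Set.Ioc (0:ℝ) 1)]
        with s hs hne
      exact pointwise_bound f hfm hf hs.1 (lt_of_le_of_ne hs.2 hne)
    have hhalf : (∫ s in Set.Ioc (0:ℝ) 1, s) = 1 / 2 := by
      rw [ftc1 (zero_le_one)]; norm_num
    have hsplit : (∫ s in Set.Ioc (0:ℝ) 1,
        ((∫ r in Set.Ioc (0:ℝ) 1, ‖f r‖ ^ 2 * r) * s
          + 2 * (s ^ 3 / ((1 - s ^ 2) * Real.sqrt (1 - s ^ 2))
            * ∫ r in Set.Ioc s 1, ‖f r‖ ^ 2 * r * Real.sqrt (1 - r ^ 2))))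
        = (∫ r in Set.Ioc (0:ℝ) 1, ‖f r‖ ^ 2 * r) * (1 / 2)
          + 2 * ∫ s in Set.Ioc (0:ℝ) 1,
              (s ^ 3 / ((1 - s ^ 2) * Real.sqrt (1 - s ^ 2))
                * ∫ r in Set.Ioc s 1, ‖f r‖ ^ 2 * r * Real.sqrt (1 - r ^ 2)) := by
      rw [integral_add (hs_int.const_mul _) (hψG_int.const_mul 2),
        integral_const_mul, integral_const_mul, hhalf]
    linarith [hmono, hsplit, hψG_le]
  · rw [integral_undef hTi]
    linarith
end

section
/- For each integer l ≥ 1, define the operator T_l on L²([0,1], r dr) by (T_l f)(s) = (1/(1−s²)) ∫_s^1 (s/r)^{l−1} f(r) r dr for 0 < s < 1. Then ∫₀¹ |(T_l f)(s)|² s ds ≤ (9/4) ∫₀¹ |f(r)|² r dr for all f ∈ L²([0,1], r dr), with the bound independent of l. -/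
open MeasureTheory Set
open scoped ENNReal

/-- The operator `T_l`, `l ≥ 1`, of Lemma 3. -/
noncomputable def Tl (l : ℕ) (f : ℝ → ℂ) (s : ℝ) : ℂ :=
  (1 / (1 - (s:ℂ) ^ 2)) * ∫ r in Set.Ioc s 1, ((s / r : ℝ) : ℂ) ^ (l - 1) * f r * (r:ℂ)

lemma aux_sqrt_intable {s : ℝ} (hs1 : s ≤ 1) :
    IntervalIntegrable (fun r : ℝ => (1-r) ^ (-(1/2):ℝ)) volume s 1 := by
  have h := (intervalIntegral.intervalIntegrable_rpow' (a := 0) (b := 1 - s)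
    (r := -(1/2)) (by norm_num)).comp_sub_left 1
  simpa using h.symm

lemma aux_sqrt_int {s : ℝ} (hs1 : s ≤ 1) :
    IntegrableOn (fun r : ℝ => (1-r) ^ (-(1/2):ℝ)) (Set.Ioc s 1) := by
  have h := (aux_sqrt_intable hs1)
  rw [intervalIntegrable_iff, uIoc_of_le hs1] at h
  exact h

lemma aux_sqrt_val {s : ℝ} (hs0 : 0 ≤ s) (hs1 : s ≤ 1) :
    ∫ r in Set.Ioc s 1, (1-r) ^ (-(1/2):ℝ) = 2 * Real.sqrt (1-s) := by
  rw [← intervalIntegral.integral_of_le hs1]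
  have h := intervalIntegral.integral_comp_sub_left (a := s) (b := 1)
    (fun x : ℝ => x ^ (-(1/2):ℝ)) 1
  rw [h, sub_self, integral_rpow (by norm_num)]
  norm_num
  rw [Real.sqrt_eq_rpow]
  ring

lemma aux_inner_intable {r : ℝ} (hr1 : r < 1) (hr0 : 0 ≤ r) :
    IntervalIntegrable (fun s : ℝ => (1-s) ^ (-(3/2):ℝ)) volume 0 r := by
  have h0 : (0:ℝ) ∉ uIcc (1 - r) (1 - 0) := by
    rw [Set.uIcc_of_le (by linarith)]
    intro h; simp at h; linarith
  have h := (intervalIntegral.intervalIntegrable_rpow (a := 1 - r) (b := 1 - 0)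
    (r := -(3/2)) (Or.inr h0)).comp_sub_left 1
  simpa using h.symm

lemma aux_inner_val {r : ℝ} (hr1 : r < 1) (hr0 : 0 ≤ r) :
    ∫ s in Set.Ioo 0 r, (1-s) ^ (-(3/2):ℝ) = 2 * ((1-r) ^ (-(1/2):ℝ) - 1) := by
  rw [← MeasureTheory.integral_Ioc_eq_integral_Ioo, ← intervalIntegral.integral_of_le hr0]
  have h := intervalIntegral.integral_comp_sub_left (a := 0) (b := r)
    (fun x : ℝ => x ^ (-(3/2):ℝ)) 1
  rw [h, sub_zero]
  have h0 : (0:ℝ) ∉ uIcc (1 - r) 1 := by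
    rw [Set.uIcc_of_le (by linarith)]
    intro h; simp at h; linarith
  rw [integral_rpow (Or.inr ⟨by norm_num, h0⟩)]
  norm_num
  ring

/-- the main estimate, for strongly measurable `g`. -/
lemma Tl_main (l : ℕ) (hl : 1 ≤ l) (g : ℝ → ℂ) (hgm : StronglyMeasurable g)
    (hg : IntegrableOn (fun r : ℝ => ‖g r‖ ^ 2 * r) (Set.Ioc (0:ℝ) 1)) :
    (∫ s in Set.Ioc (0:ℝ) 1, ‖Tl l g s‖ ^ 2 * s)
      ≤ (9 / 4) * ∫ r in Set.Ioc (0:ℝ) 1, ‖g r‖ ^ 2 * r := by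
  classical
  have hRr0 : 0 ≤ ∫ r in Set.Ioc (0:ℝ) 1, ‖g r‖ ^ 2 * r :=
    setIntegral_nonneg measurableSet_Ioc fun r hr => mul_nonneg (by positivity) hr.1.le
  by_cases hTm : AEStronglyMeasurable (fun s : ℝ => ‖Tl l g s‖ ^ 2 * s)
      (volume.restrict (Set.Ioc (0:ℝ) 1))
  swap
  · rw [integral_undef (fun h => hTm h.aestronglyMeasurable)]
    positivity
  -- notation
  set G : ℝ → ℝ≥0∞ := fun r => ENNReal.ofReal (‖g r‖ ^ 2 * (r * Real.sqrt (1-r))) with hG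
  have hmg : Measurable fun r : ℝ => ‖g r‖ := hgm.measurable.norm
  have hmeasG : Measurable G := by
    apply Measurable.ennreal_ofReal
    exact (hmg.pow_const 2).mul (measurable_id.mul (by fun_prop))
  set B : ℝ → ℝ≥0∞ := fun s => ∫⁻ r in Set.Ioc s 1, G r with hB
  set W : ℝ → ℝ := fun s => (1/2) * (1-s) ^ (-(3/2):ℝ) with hW
  -- integrability of ‖g r‖ * r
  have hid : IntegrableOn (fun r : ℝ => r) (Set.Ioc (0:ℝ) 1) := by
    apply Continuous.integrableOn_Ioc
    fun_prop
  have hgr_int : IntegrableOn (fun r : ℝ => ‖g r‖ * r) (Set.Ioc (0:ℝ) 1) := by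
    refine Integrable.mono' ((hg.add hid).div_const 2)
      ((hgm.norm.mul stronglyMeasurable_id).aestronglyMeasurable) ?_
    filter_upwards [ae_restrict_mem measurableSet_Ioc] with r hr
    have hr0 : 0 ≤ r := hr.1.le
    have h1 : ‖‖g r‖ * r‖ = ‖g r‖ * r := by
      rw [Real.norm_eq_abs, abs_of_nonneg (by positivity)]
    rw [h1]
    simp only [Pi.add_apply]
    nlinarith [mul_nonneg hr0 (sq_nonneg (‖g r‖ - 1))]
  -- STEP 1 : pointwise bound
  have step1 : ∀ s ∈ Set.Ioo (0:ℝ) 1,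
      ENNReal.ofReal (‖Tl l g s‖ ^ 2 * s) ≤ ENNReal.ofReal (W s) * B s := by
    intro s hs
    obtain ⟨hs0, hs1⟩ := hs
    have hu : (0:ℝ) < 1 - s^2 := by nlinarith
    set I : ℝ := ∫ r in Set.Ioc s 1, ‖g r‖ * r with hIdef
    have hInt : IntegrableOn (fun r : ℝ => ‖g r‖ * r) (Set.Ioc s 1) :=
      hgr_int.mono_set (Set.Ioc_subset_Ioc_left hs0.le)
    have hI0 : 0 ≤ I := setIntegral_nonneg measurableSet_Ioc
      fun r hr => mul_nonneg (norm_nonneg _) (le_trans hs0.le hr.1.le)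
    have hnorm : ‖Tl l g s‖ ≤ 1/(1-s^2) * I := by
      unfold Tl
      rw [norm_mul]
      have h1 : ‖(1:ℂ)/(1-(s:ℂ)^2)‖ = 1/(1-s^2) := by
        have h2 : ((1:ℂ) - (s:ℂ)^2) = ((1-s^2 : ℝ) : ℂ) := by push_cast; ring
        rw [h2, norm_div, norm_one, Complex.norm_real, Real.norm_eq_abs, abs_of_pos hu]
      rw [h1]
      refine mul_le_mul_of_nonneg_left ?_ (by positivity)
      refine norm_integral_le_of_norm_le hInt ?_
      filter_upwards [ae_restrict_mem measurableSet_Ioc] with r hr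
      have hr0 : 0 < r := lt_trans hs0 hr.1
      have hsr : 0 ≤ s/r := div_nonneg hs0.le hr0.le
      rw [norm_mul, norm_mul]
      have h3 : ‖(((s/r : ℝ)):ℂ) ^ (l-1)‖ ≤ 1 := by
        rw [norm_pow, Complex.norm_real, Real.norm_eq_abs, abs_of_nonneg hsr]
        exact pow_le_one₀ hsr ((div_le_one hr0).2 hr.1.le)
      have h4 : ‖(r:ℂ)‖ = r := by rw [Complex.norm_real, Real.norm_eq_abs, abs_of_pos hr0]
      calc ‖(((s/r:ℝ)):ℂ)^(l-1)‖ * ‖g r‖ * ‖(r:ℂ)‖ ≤ 1 * ‖g r‖ * ‖(r:ℂ)‖ :=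
            mul_le_mul_of_nonneg_right
              (mul_le_mul_of_nonneg_right h3 (norm_nonneg _)) (norm_nonneg _)
        _ = ‖g r‖ * r := by rw [h4]; ring
    -- Cauchy–Schwarz
    set qq : ℝ → ℝ := fun r => Real.sqrt (Real.sqrt (1-r)) with hqq
    set φ : ℝ → ℝ≥0∞ := fun r => ENNReal.ofReal (‖g r‖ * Real.sqrt r * qq r) with hφ
    set ψ : ℝ → ℝ≥0∞ := fun r => ENNReal.ofReal (Real.sqrt r / qq r) with hψ
    have hφm : AEMeasurable φ (volume.restrict (Set.Ioc s 1)) := by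
      refine Measurable.aemeasurable (Measurable.ennreal_ofReal ?_)
      exact (hmg.mul (by fun_prop)).mul (by fun_prop)
    have hψm : AEMeasurable ψ (volume.restrict (Set.Ioc s 1)) := by
      refine Measurable.aemeasurable (Measurable.ennreal_ofReal ?_)
      fun_prop
    have hIlin : ENNReal.ofReal I = ∫⁻ r in Set.Ioc s 1, ENNReal.ofReal (‖g r‖ * r) := by
      refine ofReal_integral_eq_lintegral_ofReal hInt ?_
      filter_upwards [ae_restrict_mem measurableSet_Ioc] with r hr
      exact mul_nonneg (norm_nonneg _) (le_trans hs0.le hr.1.le)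
    have hne1 : ∀ᵐ r ∂(volume.restrict (Set.Ioc s 1)), r ≠ (1:ℝ) := by
      rw [ae_iff]
      have h1 : {a : ℝ | ¬ a ≠ 1} = {1} := by ext a; simp
      rw [h1, Measure.restrict_apply (measurableSet_singleton 1)]
      exact measure_mono_null Set.inter_subset_left (measure_singleton 1)
    have hprod : (∫⁻ r in Set.Ioc s 1, ENNReal.ofReal (‖g r‖ * r))
        = ∫⁻ r in Set.Ioc s 1, (φ * ψ) r := by
      refine lintegral_congr_ae ?_
      filter_upwards [ae_restrict_mem measurableSet_Ioc, hne1] with r hr hr1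
      have hrlt : r < 1 := lt_of_le_of_ne hr.2 hr1
      have hr0 : 0 < r := lt_trans hs0 hr.1
      have hq0 : 0 < qq r := Real.sqrt_pos.2 (Real.sqrt_pos.2 (by linarith))
      simp only [Pi.mul_apply, hφ, hψ]
      rw [← ENNReal.ofReal_mul (by positivity)]
      congr 1
      have h5 : ‖g r‖ * Real.sqrt r * qq r * (Real.sqrt r / qq r)
          = ‖g r‖ * (Real.sqrt r * Real.sqrt r) * (qq r / qq r) := by ring
      rw [h5, Real.mul_self_sqrt hr0.le, div_self hq0.ne', mul_one]
    have hpq : Real.HolderConjugate 2 2 := Real.HolderConjugate.two_two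
    have hCS := ENNReal.lintegral_mul_le_Lp_mul_Lq (volume.restrict (Set.Ioc s 1)) hpq hφm hψm
    have hφ2 : (∫⁻ r in Set.Ioc s 1, φ r ^ (2:ℝ)) = B s := by
      refine lintegral_congr_ae ?_
      filter_upwards [ae_restrict_mem measurableSet_Ioc] with r hr
      have hr0 : 0 ≤ r := le_trans hs0.le hr.1.le
      simp only [hφ, hG]
      have hnn : 0 ≤ ‖g r‖ * Real.sqrt r * qq r :=
        mul_nonneg (mul_nonneg (norm_nonneg _) (Real.sqrt_nonneg _)) (Real.sqrt_nonneg _)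
      rw [ENNReal.ofReal_rpow_of_nonneg hnn (by norm_num)]
      congr 1
      rw [show (2:ℝ) = ((2:ℕ):ℝ) by norm_num, Real.rpow_natCast]
      rw [mul_pow, mul_pow, Real.sq_sqrt hr0, hqq, Real.sq_sqrt (Real.sqrt_nonneg _)]
      ring
    have hψ2 : (∫⁻ r in Set.Ioc s 1, ψ r ^ (2:ℝ)) ≤ ENNReal.ofReal (2 * Real.sqrt (1-s)) := by
      have hb : (∫⁻ r in Set.Ioc s 1, ψ r ^ (2:ℝ))
          ≤ ∫⁻ r in Set.Ioc s 1, ENNReal.ofReal ((1-r) ^ (-(1/2):ℝ)) := by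
        refine lintegral_mono_ae ?_
        filter_upwards [ae_restrict_mem measurableSet_Ioc] with r hr
        have hr0 : 0 ≤ r := le_trans hs0.le hr.1.le
        simp only [hψ]
        have hnn : 0 ≤ Real.sqrt r / qq r :=
          div_nonneg (Real.sqrt_nonneg _) (Real.sqrt_nonneg _)
        rw [ENNReal.ofReal_rpow_of_nonneg hnn (by norm_num)]
        apply ENNReal.ofReal_le_ofReal
        rw [show (2:ℝ) = ((2:ℕ):ℝ) by norm_num, Real.rpow_natCast]
        rw [div_pow, Real.sq_sqrt hr0, hqq, Real.sq_sqrt (Real.sqrt_nonneg _)]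
        rcases lt_or_eq_of_le hr.2 with hrlt | hre
        · have hsq : 0 < Real.sqrt (1-r) := Real.sqrt_pos.2 (by linarith)
          rw [Real.rpow_neg (by linarith), Real.sqrt_eq_rpow] at *
          calc r / (1-r) ^ ((1:ℝ)/2) ≤ 1 / (1-r) ^ ((1:ℝ)/2) := by gcongr
            _ = ((1-r) ^ ((1/2):ℝ))⁻¹ := one_div _
        · subst hre
          have h9 : (1:ℝ) - 1 = 0 := by norm_num
          rw [h9, Real.sqrt_zero, div_zero]
          exact Real.rpow_nonneg le_rfl _
      refine hb.trans ?_
      rw [← ofReal_integral_eq_lintegral_ofReal (aux_sqrt_int hs1.le) ?_]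
      · rw [aux_sqrt_val hs0.le hs1.le]
      · filter_upwards [ae_restrict_mem measurableSet_Ioc] with r hr
        exact Real.rpow_nonneg (by linarith [hr.2]) _
    have hXX : ∀ X : ℝ≥0∞, X ^ ((1:ℝ)/2) * X ^ ((1:ℝ)/2) = X := by
      intro X
      rw [← ENNReal.rpow_add_of_nonneg _ _ (by norm_num) (by norm_num)]
      norm_num
    have key : ENNReal.ofReal I * ENNReal.ofReal I
        ≤ B s * ENNReal.ofReal (2 * Real.sqrt (1-s)) := by
      have h6 : ENNReal.ofReal I ≤ (∫⁻ r in Set.Ioc s 1, φ r ^ (2:ℝ)) ^ ((1:ℝ)/2)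
          * (∫⁻ r in Set.Ioc s 1, ψ r ^ (2:ℝ)) ^ ((1:ℝ)/2) := by
        rw [hIlin, hprod]
        simpa using hCS
      calc ENNReal.ofReal I * ENNReal.ofReal I
          ≤ ((∫⁻ r in Set.Ioc s 1, φ r ^ (2:ℝ)) ^ ((1:ℝ)/2)
              * (∫⁻ r in Set.Ioc s 1, ψ r ^ (2:ℝ)) ^ ((1:ℝ)/2))
            * ((∫⁻ r in Set.Ioc s 1, φ r ^ (2:ℝ)) ^ ((1:ℝ)/2)
              * (∫⁻ r in Set.Ioc s 1, ψ r ^ (2:ℝ)) ^ ((1:ℝ)/2)) := mul_le_mul' h6 h6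
        _ = ((∫⁻ r in Set.Ioc s 1, φ r ^ (2:ℝ)) ^ ((1:ℝ)/2)
              * (∫⁻ r in Set.Ioc s 1, φ r ^ (2:ℝ)) ^ ((1:ℝ)/2))
            * ((∫⁻ r in Set.Ioc s 1, ψ r ^ (2:ℝ)) ^ ((1:ℝ)/2)
              * (∫⁻ r in Set.Ioc s 1, ψ r ^ (2:ℝ)) ^ ((1:ℝ)/2)) := by ring
        _ = (∫⁻ r in Set.Ioc s 1, φ r ^ (2:ℝ)) * (∫⁻ r in Set.Ioc s 1, ψ r ^ (2:ℝ)) := by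
            rw [hXX, hXX]
        _ ≤ B s * ENNReal.ofReal (2 * Real.sqrt (1-s)) := by
            rw [hφ2]
            exact mul_le_mul' le_rfl hψ2
    -- assemble
    have hfin1 : ENNReal.ofReal (‖Tl l g s‖ ^ 2 * s)
        ≤ ENNReal.ofReal (s/(1-s^2)^2) * (ENNReal.ofReal I * ENNReal.ofReal I) := by
      rw [← ENNReal.ofReal_mul hI0, ← ENNReal.ofReal_mul (by positivity)]
      apply ENNReal.ofReal_le_ofReal
      have h7 : ‖Tl l g s‖ ^ 2 ≤ (1/(1-s^2) * I) ^ 2 := by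
        apply pow_le_pow_left₀ (norm_nonneg _) hnorm
      calc ‖Tl l g s‖ ^ 2 * s ≤ (1/(1-s^2) * I) ^ 2 * s := by
            exact mul_le_mul_of_nonneg_right h7 hs0.le
        _ = s/(1-s^2)^2 * (I * I) := by field_simp
    refine hfin1.trans ?_
    calc ENNReal.ofReal (s/(1-s^2)^2) * (ENNReal.ofReal I * ENNReal.ofReal I)
        ≤ ENNReal.ofReal (s/(1-s^2)^2) * (B s * ENNReal.ofReal (2 * Real.sqrt (1-s))) :=
          mul_le_mul' le_rfl key
      _ = (ENNReal.ofReal (s/(1-s^2)^2) * ENNReal.ofReal (2 * Real.sqrt (1-s))) * B s := by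
          ring
      _ ≤ ENNReal.ofReal (W s) * B s := by
          apply mul_le_mul_left
          rw [← ENNReal.ofReal_mul (by positivity)]
          apply ENNReal.ofReal_le_ofReal
          -- the elementary real inequality
          have hu0 : (0:ℝ) < 1 - s := by linarith
          set v := Real.sqrt (1-s) with hv'
          have hv0 : 0 < v := Real.sqrt_pos.2 hu0
          have hvv : v * v = 1 - s := Real.mul_self_sqrt hu0.le
          have hrpow : (1-s) ^ (-(3/2):ℝ) = ((1-s) * v)⁻¹ := by
            rw [Real.rpow_neg hu0.le]
            congr 1
            rw [show (3/2 : ℝ) = 1 + 1/2 by norm_num, Real.rpow_add hu0, Real.rpow_one,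
              ← Real.sqrt_eq_rpow]
          rw [hW]
          simp only
          rw [hrpow]
          have h8 : (1 - s^2) = (1-s) * (1+s) := by ring
          rw [h8]
          rw [div_mul_eq_mul_div, div_le_iff₀ (by positivity)]
          rw [mul_comm (1/2 : ℝ) _, inv_mul_eq_div, div_mul_eq_mul_div, le_div_iff₀ (by positivity)]
          nlinarith [hvv, mul_nonneg (mul_nonneg hu0.le hu0.le) (sq_nonneg (1-s)), hv0.le, hs0.le]
  -- a.e. s ≠ 1
  have hne : ∀ᵐ s ∂(volume.restrict (Set.Ioc (0:ℝ) 1)), s ≠ (1:ℝ) := by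
    rw [ae_iff]
    have h1 : {a : ℝ | ¬ a ≠ 1} = {1} := by ext a; simp
    rw [h1, Measure.restrict_apply (measurableSet_singleton 1)]
    exact measure_mono_null Set.inter_subset_left (measure_singleton 1)
  -- STEP 2
  have step2 : (∫⁻ s in Set.Ioc (0:ℝ) 1, ENNReal.ofReal (‖Tl l g s‖ ^ 2 * s))
      ≤ ∫⁻ s in Set.Ioc (0:ℝ) 1, ENNReal.ofReal (W s) * B s := by
    refine lintegral_mono_ae ?_
    filter_upwards [ae_restrict_mem measurableSet_Ioc, hne] with s hs hs1
    exact step1 s ⟨hs.1, lt_of_le_of_ne hs.2 hs1⟩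
  -- STEP 3 : Tonelli and inner integral
  have hWm : Measurable fun s : ℝ => ENNReal.ofReal (W s) := by
    apply Measurable.ennreal_ofReal
    fun_prop
  have step3 : (∫⁻ s in Set.Ioc (0:ℝ) 1, ENNReal.ofReal (W s) * B s)
      ≤ ∫⁻ r in Set.Ioc (0:ℝ) 1, ENNReal.ofReal (‖g r‖ ^ 2 * r) := by
    have hkm : Measurable (Function.uncurry fun s r : ℝ =>
        ENNReal.ofReal (W s) * (Set.Ioi s).indicator G r) := by
      have h1 : (Function.uncurry fun s r : ℝ => ENNReal.ofReal (W s) * (Set.Ioi s).indicator G r)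
          = fun p : ℝ × ℝ => ENNReal.ofReal (W p.1)
              * Set.indicator {q : ℝ × ℝ | q.1 < q.2} (fun q => G q.2) p := by
        ext p
        simp only [Function.uncurry, Set.indicator, Set.mem_Ioi, Set.mem_setOf_eq]
      rw [h1]
      exact (hWm.comp measurable_fst).mul ((hmeasG.comp measurable_snd).indicator
        (measurableSet_lt measurable_fst measurable_snd))
    calc (∫⁻ s in Set.Ioc (0:ℝ) 1, ENNReal.ofReal (W s) * B s)
        = ∫⁻ s in Set.Ioc (0:ℝ) 1, ∫⁻ r in Set.Ioc (0:ℝ) 1,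
            ENNReal.ofReal (W s) * (Set.Ioi s).indicator G r := by
          refine setLIntegral_congr_fun measurableSet_Ioc (fun s hs => ?_)
          rw [lintegral_const_mul _ (hmeasG.indicator measurableSet_Ioi),
              lintegral_indicator measurableSet_Ioi,
              Measure.restrict_restrict measurableSet_Ioi]
          have h2 : Set.Ioi s ∩ Set.Ioc (0:ℝ) 1 = Set.Ioc s 1 := by
            ext r
            constructor
            · rintro ⟨ha, hb, hc⟩; exact ⟨ha, hc⟩
            · rintro ⟨ha, hc⟩; exact ⟨ha, lt_trans hs.1 ha, hc⟩
          rw [h2]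
      _ = ∫⁻ r in Set.Ioc (0:ℝ) 1, ∫⁻ s in Set.Ioc (0:ℝ) 1,
            ENNReal.ofReal (W s) * (Set.Ioi s).indicator G r :=
          lintegral_lintegral_swap hkm.aemeasurable
      _ ≤ ∫⁻ r in Set.Ioc (0:ℝ) 1, ENNReal.ofReal (‖g r‖ ^ 2 * r) := by
          refine lintegral_mono_ae ?_
          filter_upwards [ae_restrict_mem measurableSet_Ioc, hne] with r hr hr1
          have hrlt : r < 1 := lt_of_le_of_ne hr.2 hr1
          have h2 : (fun s : ℝ => ENNReal.ofReal (W s) * (Set.Ioi s).indicator G r)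
              = (Set.Iio r).indicator (fun s => ENNReal.ofReal (W s) * G r) := by
            ext s
            simp only [Set.indicator, Set.mem_Ioi, Set.mem_Iio]
            by_cases h : s < r
            · simp [h]
            · simp [h]
          rw [h2, lintegral_indicator measurableSet_Iio,
              Measure.restrict_restrict measurableSet_Iio]
          have h3 : Set.Iio r ∩ Set.Ioc (0:ℝ) 1 = Set.Ioo 0 r := by
            ext s
            constructor
            · rintro ⟨ha, hb, hc⟩; exact ⟨hb, ha⟩
            · rintro ⟨ha, hb⟩; exact ⟨hb, ha, le_trans hb.le hr.2⟩
          rw [h3, lintegral_mul_const _ hWm]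
          have hWint : IntegrableOn W (Set.Ioo (0:ℝ) r) := by
            have h := aux_inner_intable hrlt hr.1.le
            rw [intervalIntegrable_iff, uIoc_of_le hr.1.le] at h
            exact ((h.mono_set Set.Ioo_subset_Ioc_self).const_mul (1/2) : _)
          have hWnn : 0 ≤ᵐ[volume.restrict (Set.Ioo (0:ℝ) r)] W := by
            filter_upwards [ae_restrict_mem measurableSet_Ioo] with s hs
            have hx : (0:ℝ) ≤ (1-s) ^ (-(3/2):ℝ) :=
              Real.rpow_nonneg (by linarith [hs.2]) _
            exact mul_nonneg (by norm_num) hx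
          have hval : (∫⁻ s in Set.Ioo (0:ℝ) r, ENNReal.ofReal (W s))
              = ENNReal.ofReal ((1-r) ^ (-(1/2):ℝ) - 1) := by
            rw [← ofReal_integral_eq_lintegral_ofReal hWint hWnn]
            congr 1
            have hval2 := aux_inner_val hrlt hr.1.le
            calc (∫ s in Set.Ioo (0:ℝ) r, W s)
                = (1/2) * ∫ s in Set.Ioo (0:ℝ) r, (1-s) ^ (-(3/2):ℝ) := by
                  rw [← integral_const_mul]
              _ = (1-r) ^ (-(1/2):ℝ) - 1 := by rw [hval2]; ring
          rw [hval]
          set c : ℝ := (1-r) ^ (-(1/2):ℝ) with hcdef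
          have hsq : (0:ℝ) < Real.sqrt (1-r) := Real.sqrt_pos.2 (by linarith)
          have hc : c = (Real.sqrt (1-r))⁻¹ := by
            rw [hcdef, Real.rpow_neg (by linarith), Real.sqrt_eq_rpow]
          have hcnn : 0 ≤ c := by rw [hc]; positivity
          calc ENNReal.ofReal (c - 1) * G r ≤ ENNReal.ofReal c * G r :=
              mul_le_mul_left (ENNReal.ofReal_le_ofReal (by linarith)) _
            _ = ENNReal.ofReal (‖g r‖ ^ 2 * r) := by
                rw [hG]
                rw [← ENNReal.ofReal_mul hcnn]
                congr 1
                have h5 : c * (‖g r‖ ^ 2 * (r * Real.sqrt (1-r)))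
                    = ‖g r‖ ^ 2 * r * (c * Real.sqrt (1-r)) := by ring
                rw [h5, hc, inv_mul_cancel₀ hsq.ne', mul_one]
  -- wrap up
  have hnn : 0 ≤ᵐ[volume.restrict (Set.Ioc (0:ℝ) 1)] fun s : ℝ => ‖Tl l g s‖ ^ 2 * s := by
    filter_upwards [ae_restrict_mem measurableSet_Ioc] with s hs
    exact mul_nonneg (by positivity) hs.1.le
  have hnnR : 0 ≤ᵐ[volume.restrict (Set.Ioc (0:ℝ) 1)] fun r : ℝ => ‖g r‖ ^ 2 * r := by
    filter_upwards [ae_restrict_mem measurableSet_Ioc] with r hr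
    exact mul_nonneg (by positivity) hr.1.le
  have hRlin : (∫⁻ r in Set.Ioc (0:ℝ) 1, ENNReal.ofReal (‖g r‖ ^ 2 * r))
      = ENNReal.ofReal (∫ r in Set.Ioc (0:ℝ) 1, ‖g r‖ ^ 2 * r) :=
    (ofReal_integral_eq_lintegral_ofReal hg hnnR).symm
  rw [integral_eq_lintegral_of_nonneg_ae hnn hTm]
  have hfin : (∫⁻ s in Set.Ioc (0:ℝ) 1, ENNReal.ofReal (‖Tl l g s‖ ^ 2 * s)).toReal
      ≤ ∫ r in Set.Ioc (0:ℝ) 1, ‖g r‖ ^ 2 * r := by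
    have hch := (step2.trans step3).trans_eq hRlin
    calc (∫⁻ s in Set.Ioc (0:ℝ) 1, ENNReal.ofReal (‖Tl l g s‖ ^ 2 * s)).toReal
        ≤ (ENNReal.ofReal (∫ r in Set.Ioc (0:ℝ) 1, ‖g r‖ ^ 2 * r)).toReal :=
          ENNReal.toReal_mono ENNReal.ofReal_ne_top hch
      _ = _ := ENNReal.toReal_ofReal hRr0
  linarith

/-- For every `l ≥ 1`, `T_l` is bounded on `L²([0,1], r dr)` with
`‖T_l f‖² ≤ (9/4) ‖f‖²`, uniformly in `l`. -/
theorem Tl_pos_bounded (l : ℕ) (hl : 1 ≤ l) (f : ℝ → ℂ)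
    (hfm : AEStronglyMeasurable f (volume.restrict (Set.Ioc (0:ℝ) 1)))
    (hf : IntegrableOn (fun r : ℝ => ‖f r‖ ^ 2 * r) (Set.Ioc (0:ℝ) 1)) :
    (∫ s in Set.Ioc (0:ℝ) 1, ‖Tl l f s‖ ^ 2 * s)
      ≤ (9 / 4) * ∫ r in Set.Ioc (0:ℝ) 1, ‖f r‖ ^ 2 * r := by
  classical
  set g := hfm.mk f with hgdef
  have hgm : StronglyMeasurable g := hfm.stronglyMeasurable_mk
  have hfg : f =ᵐ[volume.restrict (Set.Ioc (0:ℝ) 1)] g := hfm.ae_eq_mk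
  have hRHS : (∫ r in Set.Ioc (0:ℝ) 1, ‖f r‖ ^ 2 * r)
      = ∫ r in Set.Ioc (0:ℝ) 1, ‖g r‖ ^ 2 * r :=
    integral_congr_ae (hfg.mono fun r hr => by simp only [hr])
  have hTeq : ∀ s : ℝ, 0 ≤ s → Tl l f s = Tl l g s := by
    intro s hs
    unfold Tl
    congr 1
    refine integral_congr_ae ?_
    have hle : volume.restrict (Set.Ioc s 1) ≤ volume.restrict (Set.Ioc (0:ℝ) 1) :=
      Measure.restrict_mono (Set.Ioc_subset_Ioc_left hs) le_rfl
    exact (hfg.filter_mono (ae_mono hle)).mono fun r hr => by simp only [hr]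
  have hg2 : IntegrableOn (fun r : ℝ => ‖g r‖ ^ 2 * r) (Set.Ioc (0:ℝ) 1) :=
    hf.congr (hfg.mono fun r hr => by simp only [hr])
  have hLHS : (∫ s in Set.Ioc (0:ℝ) 1, ‖Tl l f s‖ ^ 2 * s)
      = ∫ s in Set.Ioc (0:ℝ) 1, ‖Tl l g s‖ ^ 2 * s := by
    refine setIntegral_congr_fun measurableSet_Ioc fun s hs => ?_
    rw [hTeq s hs.1.le]
  rw [hRHS, hLHS]
  exact Tl_main l hl g hgm hg2
end

section
/- If Q is a multiplier of the Dirichlet space 𝒟, then (1 − |z|²)|Q′(z)| ≤ ‖M_Q‖ for all z in the open unit disk 𝔻, where ‖M_Q‖ is the norm of the multiplication operator M_Q on 𝒟. -/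
open Metric MeasureTheory Complex

/-- Taylor coefficient at 0. -/
noncomputable def dirCoeff (f : ℂ → ℂ) (n : ℕ) : ℂ :=
  iteratedDeriv n f 0 / (n.factorial : ℂ)

/-- Membership in the Dirichlet space. -/
def MemDirichlet (f : ℂ → ℂ) : Prop :=
  DifferentiableOn ℂ f (ball (0:ℂ) 1) ∧
  Summable (fun n : ℕ => ((n : ℝ) + 1) * ‖dirCoeff f n‖ ^ 2)

/-- Squared Dirichlet norm. -/
noncomputable def dirNormSq (f : ℂ → ℂ) : ℝ :=
  ∑' n : ℕ, ((n : ℝ) + 1) * ‖dirCoeff f n‖ ^ 2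

/-- Multiplier of the Dirichlet space. -/
def IsMultiplier (φ : ℂ → ℂ) : Prop :=
  DifferentiableOn ℂ φ (ball (0:ℂ) 1) ∧
  ∀ f, MemDirichlet f → MemDirichlet (fun z => φ z * f z)

/-- Operator norm of the multiplication operator. -/
noncomputable def multNorm (φ : ℂ → ℂ) : ℝ :=
  sInf {C : ℝ | 0 ≤ C ∧ ∀ f, MemDirichlet f →
    dirNormSq (fun z => φ z * f z) ≤ C ^ 2 * dirNormSq f}

/-- The column operator of `F` has norm at most `C`. -/
def ColNormLE (F : ℕ → ℂ → ℂ) (C : ℝ) : Prop :=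
  ∀ h, MemDirichlet h →
    Summable (fun j : ℕ => dirNormSq (fun z => F j z * h z)) ∧
    (∑' j : ℕ, dirNormSq (fun z => F j z * h z)) ≤ C ^ 2 * dirNormSq h

open FormalMultilinearSeries Filter Topology

/-- rep lemma -/
lemma hasFPowerSeriesOnBall_of_hasSum {a : ℕ → ℂ} {g : ℂ → ℂ}
    (h : ∀ z ∈ ball (0:ℂ) 1, HasSum (fun n => a n * z ^ n) (g z)) :
    HasFPowerSeriesOnBall g (FormalMultilinearSeries.ofScalars ℂ a) 0 1 := by
  constructor
  · -- 1 ≤ radius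
    apply ENNReal.le_of_forall_nnreal_lt
    intro r hr
    have hr1 : (r : ℝ) < 1 := by exact_mod_cast hr
    have hz : ((r:ℝ) : ℂ) ∈ ball (0:ℂ) 1 := by
      simp [mem_ball_zero_iff, _root_.abs_of_nonneg r.coe_nonneg, hr1]
    have hs : Summable (fun n => a n * ((r:ℝ):ℂ) ^ n) := (h _ hz).summable
    have hs' : Summable (fun n => ‖a n * ((r:ℝ):ℂ) ^ n‖) := summable_norm_iff.mpr hs
    apply FormalMultilinearSeries.le_radius_of_summable
    convert hs' using 2 with n
    rw [ofScalars_norm, norm_mul, norm_pow]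
    simp [_root_.abs_of_nonneg r.coe_nonneg]
  · exact one_pos
  · intro y hy
    have hy' : y ∈ ball (0:ℂ) 1 := by
      simpa [mem_ball_zero_iff, ← ENNReal.coe_one,
        ENNReal.coe_lt_coe, ← NNReal.coe_lt_coe] using hy
    have := h y hy'
    simp only [zero_add]
    convert this using 2 with n
    · rfl
    rw [ofScalars_apply_eq]
    simp [smul_eq_mul]

lemma dirHasSum {f : ℂ → ℂ} (hf : DifferentiableOn ℂ f (ball (0:ℂ) 1)) :
    ∀ z ∈ ball (0:ℂ) 1, HasSum (fun n => dirCoeff f n * z ^ n) (f z) := by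
  intro z hz
  have := Complex.hasSum_taylorSeries_on_ball hf hz
  convert this using 2 with n
  · rfl
  simp only [dirCoeff, smul_eq_mul, sub_zero]
  field_simp

lemma dirCoeff_eq_of_hasSum {a : ℕ → ℂ} {g : ℂ → ℂ}
    (hg : DifferentiableOn ℂ g (ball (0:ℂ) 1))
    (h : ∀ z ∈ ball (0:ℂ) 1, HasSum (fun n => a n * z ^ n) (g z)) :
    ∀ n, dirCoeff g n = a n := by
  have h1 := (hasFPowerSeriesOnBall_of_hasSum (dirHasSum hg)).hasFPowerSeriesAt
  have h2 := (hasFPowerSeriesOnBall_of_hasSum h).hasFPowerSeriesAt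
  have := h1.eq_formalMultilinearSeries h2
  intro n
  have h3 := congrArg (fun p : FormalMultilinearSeries ℂ ℂ ℂ => p.coeff n) this
  simp only [FormalMultilinearSeries.coeff] at h3
  have e1 : (ofScalars ℂ (dirCoeff g) n) 1 = dirCoeff g n := by
    have := ofScalars_apply_eq (𝕜 := ℂ) (E := ℂ) (dirCoeff g) (1:ℂ) n
    simpa using this
  have e2 : (ofScalars ℂ a n) 1 = a n := by
    have := ofScalars_apply_eq (𝕜 := ℂ) (E := ℂ) a (1:ℂ) n
    simpa using this
  rw [e1, e2] at h3
  exact h3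

/-- norm-summability of coefficients against powers inside the disk -/
lemma dirSummable_norm {f : ℂ → ℂ} (hf : DifferentiableOn ℂ f (ball (0:ℂ) 1))
    {z : ℂ} (hz : z ∈ ball (0:ℂ) 1) :
    Summable (fun n => ‖dirCoeff f n * z ^ n‖) := by
  have hball := hasFPowerSeriesOnBall_of_hasSum (dirHasSum hf)
  have hrad : (‖z‖₊ : ENNReal) < (ofScalars ℂ (dirCoeff f)).radius :=
    lt_of_lt_of_le (by simpa [mem_ball_zero_iff, ← NNReal.coe_lt_coe,
      ENNReal.coe_lt_coe, ← ENNReal.coe_one] using hz) hball.r_le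
  have := (ofScalars ℂ (dirCoeff f)).summable_norm_mul_pow hrad
  convert this using 2 with n
  rw [ofScalars_norm, norm_mul, norm_pow]
  simp

lemma dirCoeff_mul {f g : ℂ → ℂ} (hf : DifferentiableOn ℂ f (ball (0:ℂ) 1))
    (hg : DifferentiableOn ℂ g (ball (0:ℂ) 1)) (n : ℕ) :
    dirCoeff (fun z => f z * g z) n
      = ∑ k ∈ Finset.range (n+1), dirCoeff f k * dirCoeff g (n-k) := by
  refine dirCoeff_eq_of_hasSum
    (a := fun m => ∑ k ∈ Finset.range (m+1), dirCoeff f k * dirCoeff g (m-k))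
    (fun z hz => (hf z hz).mul (hg z hz)) (fun z hz => ?_) n
  have hF := dirSummable_norm hf hz
  have hG := dirSummable_norm hg hz
  have hsum : Summable (fun n => ∑ k ∈ Finset.range (n+1),
      (dirCoeff f k * z ^ k) * (dirCoeff g (n-k) * z ^ (n-k))) :=
    (summable_norm_sum_mul_range_of_summable_norm hF hG).of_norm
  have htsum := tsum_mul_tsum_eq_tsum_sum_range_of_summable_norm hF hG
  rw [(dirHasSum hf z hz).tsum_eq, (dirHasSum hg z hz).tsum_eq] at htsum
  have key : ∀ m : ℕ, (∑ k ∈ Finset.range (m+1), dirCoeff f k * dirCoeff g (m-k)) * z ^ m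
      = ∑ k ∈ Finset.range (m+1), (dirCoeff f k * z ^ k) * (dirCoeff g (m-k) * z ^ (m-k)) := by
    intro m
    rw [Finset.sum_mul]
    refine Finset.sum_congr rfl fun k hk => ?_
    have hk' : k ≤ m := Nat.lt_succ_iff.mp (Finset.mem_range.mp hk)
    have hkm : k + (m - k) = m := Nat.add_sub_cancel' hk'
    calc dirCoeff f k * dirCoeff g (m-k) * z ^ m
        = dirCoeff f k * dirCoeff g (m-k) * (z ^ k * z ^ (m-k)) := by
          rw [← pow_add, hkm]
      _ = dirCoeff f k * z ^ k * (dirCoeff g (m-k) * z ^ (m-k)) := by ring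
  rw [show (fun m : ℕ => (∑ k ∈ Finset.range (m+1), dirCoeff f k * dirCoeff g (m-k)) * z ^ m)
      = fun m => ∑ k ∈ Finset.range (m+1), (dirCoeff f k * z ^ k) * (dirCoeff g (m-k) * z ^ (m-k))
      from funext key]
  exact (Summable.hasSum_iff hsum).mpr htsum.symm

section CS
/-- Cauchy-Schwarz for tsums of nonneg reals -/
lemma tsum_cs {u v : ℕ → ℝ} (hu : ∀ n, 0 ≤ u n) (hv : ∀ n, 0 ≤ v n)
    (hu2 : Summable fun n => u n ^ 2) (hv2 : Summable fun n => v n ^ 2) :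
    Summable (fun n => u n * v n) ∧
    ∑' n, u n * v n ≤ Real.sqrt (∑' n, u n ^ 2) * Real.sqrt (∑' n, v n ^ 2) := by
  have hsum : Summable (fun n => u n * v n) := by
    refine Summable.of_nonneg_of_le (fun n => mul_nonneg (hu n) (hv n))
      (fun n => ?_) ((hu2.add hv2).div_const 2)
    nlinarith [sq_nonneg (u n - v n)]
  refine ⟨hsum, Summable.tsum_le_of_sum_le hsum fun s => ?_⟩
  have h1 : (∑ i ∈ s, u i * v i) ^ 2 ≤ (∑ i ∈ s, u i ^ 2) * ∑ i ∈ s, v i ^ 2 :=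
    Finset.sum_mul_sq_le_sq_mul_sq s u v
  have h2 : ∑ i ∈ s, u i ^ 2 ≤ ∑' n, u n ^ 2 := hu2.sum_le_tsum s (fun i _ => sq_nonneg _)
  have h3 : ∑ i ∈ s, v i ^ 2 ≤ ∑' n, v n ^ 2 := hv2.sum_le_tsum s (fun i _ => sq_nonneg _)
  have h0 : 0 ≤ ∑ i ∈ s, u i * v i := Finset.sum_nonneg fun i _ => mul_nonneg (hu i) (hv i)
  calc ∑ i ∈ s, u i * v i = Real.sqrt ((∑ i ∈ s, u i * v i) ^ 2) := (Real.sqrt_sq h0).symm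
    _ ≤ Real.sqrt ((∑' n, u n ^ 2) * ∑' n, v n ^ 2) := by
        apply Real.sqrt_le_sqrt
        calc (∑ i ∈ s, u i * v i) ^ 2 ≤ (∑ i ∈ s, u i ^ 2) * ∑ i ∈ s, v i ^ 2 := h1
          _ ≤ (∑' n, u n ^ 2) * ∑' n, v n ^ 2 := by
              apply mul_le_mul h2 h3 (Finset.sum_nonneg fun i _ => sq_nonneg _)
                (tsum_nonneg fun n => sq_nonneg _)
    _ = Real.sqrt (∑' n, u n ^ 2) * Real.sqrt (∑' n, v n ^ 2) :=
        Real.sqrt_mul (tsum_nonneg fun n => sq_nonneg _) _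
end CS

section Geo
lemma geoSum {x : ℝ} (h0 : 0 ≤ x) (h1 : x < 1) :
    HasSum (fun n : ℕ => ((n:ℝ) + 1) * x ^ (n+1)) (x / (1-x)^2) := by
  have h := hasSum_coe_mul_geometric_of_norm_lt_one (r := x)
    (by rwa [Real.norm_eq_abs, _root_.abs_of_nonneg h0])
  have h2 : HasSum (fun n : ℕ => ((n+1:ℕ):ℝ) * x ^ (n+1)) (x/(1-x)^2) := by
    refine (hasSum_nat_add_iff (f := fun n : ℕ => (n:ℝ) * x ^ n) 1).mpr ?_
    simpa using h
  convert h2 using 2 with n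
  push_cast; ring
end Geo

section DerivBound

lemma dirNormSq_nonneg (f : ℂ → ℂ) : 0 ≤ dirNormSq f :=
  tsum_nonneg fun n => mul_nonneg (by positivity) (sq_nonneg _)

lemma dirDerivBound {g : ℂ → ℂ} (hg1 : DifferentiableOn ℂ g (ball (0:ℂ) 1))
    (hg2 : Summable fun n : ℕ => ((n:ℝ)+1) * ‖dirCoeff g n‖ ^ 2)
    {w : ℂ} (hw : w ∈ ball (0:ℂ) 1) :
    (1 - ‖w‖ ^ 2) * ‖deriv g w‖ ≤ Real.sqrt (dirNormSq g) := by
  set a := dirCoeff g with ha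
  set r := ‖w‖ with hrdef
  have hr1 : r < 1 := mem_ball_zero_iff.mp hw
  have hr0 : 0 ≤ r := norm_nonneg _
  set D := dirNormSq g with hD
  have hD0 : 0 ≤ D := dirNormSq_nonneg g
  have hball := hasFPowerSeriesOnBall_of_hasSum (dirHasSum hg1)
  -- the tail sum bound : ∑' (n+2)‖a (n+1)‖² ≤ D
  have hshift : Summable (fun n : ℕ => (((n:ℝ)+1)+1) * ‖a (n+1)‖ ^ 2) := by
    have := (summable_nat_add_iff (f := fun n : ℕ => ((n:ℝ)+1) * ‖a n‖ ^ 2) 1).mpr hg2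
    convert this using 2 with n
    · rfl
    push_cast; ring
  have htail : (∑' n : ℕ, (((n:ℝ)+1)+1) * ‖a (n+1)‖ ^ 2) ≤ D := by
    have hsum := hg2.sum_add_tsum_nat_add 1
    have h0' : 0 ≤ ∑ i ∈ Finset.range 1, ((i:ℝ)+1) * ‖a i‖ ^ 2 := by
      apply Finset.sum_nonneg; intro i _; positivity
    have heq : (∑' n : ℕ, (((n:ℝ)+1)+1) * ‖a (n+1)‖ ^ 2)
        = ∑' n : ℕ, (((n+1:ℕ):ℝ)+1) * ‖a (n+1)‖ ^ 2 := by
      congr 1; funext n; push_cast; ring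
    rw [heq]
    rw [hD]
    unfold dirNormSq
    rw [← ha, ← hsum]
    linarith
  by_cases hw0 : w = 0
  · -- derivative at zero is the first coefficient
    have hder : deriv g w = a 1 := by
      rw [hw0]
      have := hball.hasFPowerSeriesAt.deriv
      rw [this]
      have := ofScalars_apply_eq (𝕜 := ℂ) (E := ℂ) a (1:ℂ) 1
      simpa [ha] using this
    have hterm : ((1:ℝ)+1) * ‖a 1‖ ^ 2 ≤ D := by
      have := hg2.le_tsum 1 (fun j _ => by positivity)
      rw [hD]; unfold dirNormSq; rw [← ha]
      simpa using this
    have h1 : ‖a 1‖ ≤ Real.sqrt D := by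
      rw [show ‖a 1‖ = Real.sqrt (‖a 1‖ ^ 2) from (Real.sqrt_sq (norm_nonneg _)).symm]
      apply Real.sqrt_le_sqrt; nlinarith [sq_nonneg ‖a 1‖]
    rw [hder]
    have : (1 - r ^ 2) ≤ 1 := by nlinarith
    calc (1 - r^2) * ‖a 1‖ ≤ 1 * ‖a 1‖ := by
          apply mul_le_mul_of_nonneg_right this (norm_nonneg _)
      _ = ‖a 1‖ := one_mul _
      _ ≤ Real.sqrt D := h1
  · -- main case
    have hrpos : 0 < r := by
      rw [hrdef]; exact norm_pos_iff.mpr hw0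
    have hmem : w ∈ Metric.eball (0:ℂ) 1 := by
      rw [Metric.mem_eball, edist_zero_right, ← ENNReal.coe_one, enorm_eq_nnnorm, ENNReal.coe_lt_coe,
        ← NNReal.coe_lt_coe]
      simpa using hr1
    have h1 := hball.fderiv.hasSum hmem
    have h2 := (ContinuousLinearMap.apply ℂ ℂ w).hasSum h1
    simp only [ContinuousLinearMap.apply_apply, zero_add] at h2
    have hfd : fderiv ℂ g w w = w * deriv g w := by
      have h := (fderiv ℂ g w).map_smul w (1:ℂ)
      simp only [smul_eq_mul, mul_one] at h
      rw [h]
      rfl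
    have HS : HasSum (fun n : ℕ => ((n:ℂ)+1) * (a (n+1) * w^(n+1))) (w * deriv g w) := by
      rw [← hfd]
      convert h2 using 2 with n
      · rfl
      rw [derivSeries_apply_diag]
      have := ofScalars_apply_eq (𝕜 := ℂ) (E := ℂ) a w (n+1)
      rw [this]
      push_cast [smul_eq_mul]
      ring
    -- Cauchy–Schwarz setup
    set u : ℕ → ℝ := fun n => Real.sqrt ((n:ℝ)+2) * ‖a (n+1)‖ with hu
    set v : ℕ → ℝ := fun n => (((n:ℝ)+1) * r^(n+1)) / Real.sqrt ((n:ℝ)+2) with hv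
    have hupos : ∀ n, 0 ≤ u n := fun n => by positivity
    have hvpos : ∀ n, 0 ≤ v n := fun n => by positivity
    have hsq : ∀ n : ℕ, Real.sqrt ((n:ℝ)+2) ^ 2 = (n:ℝ)+2 := fun n =>
      Real.sq_sqrt (by positivity)
    have hterm : ∀ n : ℕ, ‖((n:ℂ)+1) * (a (n+1) * w^(n+1))‖ = u n * v n := by
      intro n
      have hs : (0:ℝ) < Real.sqrt ((n:ℝ)+2) := Real.sqrt_pos.mpr (by positivity)
      rw [norm_mul, norm_mul, norm_pow]
      rw [show ‖(n:ℂ)+1‖ = (n:ℝ)+1 by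
        rw [show ((n:ℂ)+1) = ((n+1:ℕ):ℂ) by push_cast; ring]
        rw [Complex.norm_natCast]; push_cast; ring]
      rw [← hrdef, hu, hv]
      field_simp
    have hu2 : Summable (fun n => u n ^ 2) := by
      have : (fun n => u n ^ 2) = fun n : ℕ => (((n:ℝ)+1)+1) * ‖a (n+1)‖ ^ 2 := by
        funext n; rw [hu]; rw [mul_pow, hsq n]; ring
      rw [this]; exact hshift
    have hu2sum : (∑' n, u n ^ 2) ≤ D := by
      have : (fun n => u n ^ 2) = fun n : ℕ => (((n:ℝ)+1)+1) * ‖a (n+1)‖ ^ 2 := by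
        funext n; rw [hu]; rw [mul_pow, hsq n]; ring
      rw [this]; exact htail
    -- geometric bound for v
    have hx1 : r^2 < 1 := by nlinarith
    have hx0 : 0 ≤ r^2 := sq_nonneg r
    have hW := geoSum hx0 hx1
    have hvW : ∀ n : ℕ, v n ^ 2 ≤ ((n:ℝ)+1) * (r^2) ^ (n+1) := by
      intro n
      rw [hv]
      rw [div_pow, mul_pow, hsq n]
      rw [div_le_iff₀ (by positivity)]
      have hpow : (r ^ (n+1)) ^ 2 = (r^2) ^ (n+1) := by ring
      rw [hpow]
      have h1 : ((n:ℝ)+1)^2 ≤ ((n:ℝ)+1) * ((n:ℝ)+2) := by nlinarith [Nat.cast_nonneg (α := ℝ) n]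
      have h2 : (0:ℝ) ≤ (r^2)^(n+1) := by positivity
      nlinarith [mul_le_mul_of_nonneg_right h1 h2]
    have hv2 : Summable (fun n => v n ^ 2) :=
      Summable.of_nonneg_of_le (fun n => sq_nonneg _) hvW hW.summable
    have hv2sum : (∑' n, v n ^ 2) ≤ r^2 / (1 - r^2)^2 := by
      rw [← hW.tsum_eq]
      exact hv2.tsum_le_tsum hvW hW.summable
    obtain ⟨hcs_sum, hcs⟩ := tsum_cs hupos hvpos hu2 hv2
    -- assemble
    have hnorm : r * ‖deriv g w‖ ≤ ∑' n, u n * v n := by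
      have hsn : Summable (fun n : ℕ => ‖((n:ℂ)+1) * (a (n+1) * w^(n+1))‖) := by
        apply Summable.congr hcs_sum
        intro n; exact (hterm n).symm
      have := norm_tsum_le_tsum_norm hsn
      rw [HS.tsum_eq] at this
      calc r * ‖deriv g w‖ = ‖w * deriv g w‖ := by rw [norm_mul]
        _ ≤ ∑' n : ℕ, ‖((n:ℂ)+1) * (a (n+1) * w^(n+1))‖ := this
        _ = ∑' n, u n * v n := by congr 1; funext n; exact hterm n
    have hden : (0:ℝ) < 1 - r^2 := by nlinarith
    have hrhs : Real.sqrt (∑' n, u n^2) * Real.sqrt (∑' n, v n^2)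
        ≤ Real.sqrt D * (r / (1 - r^2)) := by
      apply mul_le_mul
      · exact Real.sqrt_le_sqrt hu2sum
      · calc Real.sqrt (∑' n, v n ^ 2) ≤ Real.sqrt (r^2/(1-r^2)^2) := Real.sqrt_le_sqrt hv2sum
          _ = r / (1 - r^2) := by
              rw [show r^2/(1-r^2)^2 = (r/(1-r^2))^2 from (div_pow r (1-r^2) 2).symm]
              exact Real.sqrt_sq (by positivity)
      · exact Real.sqrt_nonneg _
      · exact Real.sqrt_nonneg _
    have key : r * ‖deriv g w‖ ≤ Real.sqrt D * (r / (1 - r^2)) :=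
      le_trans hnorm (le_trans hcs hrhs)
    have key2 : r * ‖deriv g w‖ * (1 - r^2) ≤ Real.sqrt D * r := by
      have := mul_le_mul_of_nonneg_right key (le_of_lt hden)
      calc r * ‖deriv g w‖ * (1-r^2) ≤ Real.sqrt D * (r/(1-r^2)) * (1-r^2) := this
        _ = Real.sqrt D * r := by
            rw [mul_assoc, div_mul_cancel₀ _ (ne_of_gt hden)]
    nlinarith [norm_nonneg (deriv g w), Real.sqrt_nonneg D, hrpos]

end DerivBound

section Graph
open scoped ENNReal

noncomputable def sqf (n : ℕ) : ℂ := ((Real.sqrt ((n:ℝ)+1) : ℝ) : ℂ)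

lemma sqf_ne (n : ℕ) : sqf n ≠ 0 := by
  simp only [sqf, ne_eq, Complex.ofReal_eq_zero]
  positivity

lemma norm_sqf (n : ℕ) : ‖sqf n‖ = Real.sqrt ((n:ℝ)+1) := by
  simp [sqf, Real.sqrt_nonneg, _root_.abs_of_nonneg]

lemma norm_div_sqf_sq (c : ℂ) (n : ℕ) : ‖c / sqf n‖ ^ 2 = ‖c‖^2 / ((n:ℝ)+1) := by
  rw [norm_div, div_pow, norm_sqf, Real.sq_sqrt (by positivity)]

lemma norm_mul_sqf_sq (c : ℂ) (n : ℕ) : ‖sqf n * c‖ ^ 2 = ((n:ℝ)+1) * ‖c‖^2 := by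
  rw [norm_mul, mul_pow, norm_sqf, Real.sq_sqrt (by positivity)]

instance fact12 : Fact ((1:ℝ≥0∞) ≤ 2) := ⟨one_le_two⟩

lemma memlp_iff {f : ℕ → ℂ} : Memℓp f 2 ↔ Summable (fun n : ℕ => ‖f n‖^2) := by
  rw [memℓp_gen_iff (by norm_num : 0 < (2:ℝ≥0∞).toReal)]
  have : ∀ n : ℕ, ‖f n‖ ^ ((2:ℝ≥0∞).toReal) = ‖f n‖ ^ 2 := by
    intro n
    rw [show ((2:ℝ≥0∞).toReal) = ((2:ℕ):ℝ) by norm_num, Real.rpow_natCast]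
  exact summable_congr this

lemma lp_norm_sq (b : lp (fun _ : ℕ => ℂ) 2) : ‖b‖^2 = ∑' n : ℕ, ‖b n‖^2 := by
  have h := lp.norm_rpow_eq_tsum (by norm_num : 0 < (2:ℝ≥0∞).toReal) b
  have e : ∀ x : ℝ, 0 ≤ x → x ^ ((2:ℝ≥0∞).toReal) = x ^ 2 := fun x hx => by
    rw [show ((2:ℝ≥0∞).toReal) = ((2:ℕ):ℝ) by norm_num, Real.rpow_natCast]
  rw [e _ (norm_nonneg b)] at h
  rw [h]
  exact tsum_congr fun n => e _ (norm_nonneg _)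

variable (Q : ℂ → ℂ)

/-- the function attached to an ℓ² sequence -/
noncomputable def fnb (b : lp (fun _ : ℕ => ℂ) 2) : ℂ → ℂ :=
  fun z => ∑' n : ℕ, (b n / sqf n) * z ^ n

lemma fnb_hasSum (b : lp (fun _ : ℕ => ℂ) 2) :
    ∀ z ∈ ball (0:ℂ) 1, HasSum (fun n : ℕ => (b n / sqf n) * z ^ n) (fnb b z) := by
  intro z hz
  have hz1 : ‖z‖ < 1 := mem_ball_zero_iff.mp hz
  have hs : Summable (fun n : ℕ => (b n / sqf n) * z ^ n) := by
    apply Summable.of_norm_bounded (g := fun n => ‖b‖ * ‖z‖^n)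
      ((summable_geometric_of_lt_one (norm_nonneg z) hz1).mul_left _)
    intro n
    rw [norm_mul, norm_pow]
    apply mul_le_mul_of_nonneg_right _ (by positivity)
    rw [norm_div, norm_sqf]
    have h1 : (1:ℝ) ≤ Real.sqrt ((n:ℝ)+1) := by
      have h2 : Real.sqrt 1 ≤ Real.sqrt ((n:ℝ)+1) :=
        Real.sqrt_le_sqrt (by linarith [Nat.cast_nonneg (α := ℝ) n])
      simpa using h2
    calc ‖b n‖ / Real.sqrt ((n:ℝ)+1) ≤ ‖b n‖ / 1 := by
          apply div_le_div_of_nonneg_left (norm_nonneg _) one_pos h1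
        -- fallback
      _ = ‖b n‖ := div_one _
      _ ≤ ‖b‖ := lp.norm_apply_le_norm two_ne_zero b n
  exact hs.hasSum

lemma fnb_diff (b : lp (fun _ : ℕ => ℂ) 2) :
    DifferentiableOn ℂ (fnb b) (ball (0:ℂ) 1) := by
  have h := hasFPowerSeriesOnBall_of_hasSum (fnb_hasSum b)
  have := h.differentiableOn
  rwa [show Metric.eball (0:ℂ) 1 = ball (0:ℂ) 1 by
    rw [← ENNReal.coe_one, Metric.emetric_ball_nnreal]; simp] at this

lemma fnb_coeff (b : lp (fun _ : ℕ => ℂ) 2) (n : ℕ) :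
    dirCoeff (fnb b) n = b n / sqf n :=
  dirCoeff_eq_of_hasSum (fnb_diff b) (fnb_hasSum b) n

lemma fnb_mem (b : lp (fun _ : ℕ => ℂ) 2) : MemDirichlet (fnb b) := by
  refine ⟨fnb_diff b, ?_⟩
  have hb : Summable (fun n : ℕ => ‖b n‖^2) := memlp_iff.mp (lp.memℓp b)
  apply Summable.congr hb
  intro n
  rw [fnb_coeff, norm_div_sqf_sq]
  have : ((n:ℝ)+1) ≠ 0 := by positivity
  field_simp

/-- the matrix of the multiplication operator conjugated to plain ℓ² -/
noncomputable def TFun (b : lp (fun _ : ℕ => ℂ) 2) : ℕ → ℂ :=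
  fun j => sqf j * ∑ k ∈ Finset.range (j+1), dirCoeff Q k * (b (j-k) / sqf (j-k))

lemma TFun_eq (hQ1 : DifferentiableOn ℂ Q (ball (0:ℂ) 1))
    {f : ℂ → ℂ} (hf : DifferentiableOn ℂ f (ball (0:ℂ) 1))
    {b : lp (fun _ : ℕ => ℂ) 2} (hcoeff : ∀ n, dirCoeff f n = b n / sqf n) (j : ℕ) :
    TFun Q b j = sqf j * dirCoeff (fun z => Q z * f z) j := by
  rw [TFun, dirCoeff_mul hQ1 hf]
  congr 1
  exact (Finset.sum_congr rfl fun k _ => by rw [hcoeff]).symm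

lemma TFun_memlp (hQ : IsMultiplier Q) (b : lp (fun _ : ℕ => ℂ) 2) :
    Memℓp (TFun Q b) 2 := by
  have hmul := hQ.2 _ (fnb_mem b)
  rw [memlp_iff]
  apply Summable.congr hmul.2
  intro j
  rw [TFun_eq Q hQ.1 (fnb_diff b) (fnb_coeff b) j, norm_mul_sqf_sq]

noncomputable def TopMap (hQ : IsMultiplier Q) :
    lp (fun _ : ℕ => ℂ) 2 →ₗ[ℂ] lp (fun _ : ℕ => ℂ) 2 where
  toFun b := ⟨TFun Q b, TFun_memlp Q hQ b⟩
  map_add' b b' := by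
    apply Subtype.ext
    funext j
    have hco : ∀ n, ((b + b' : lp (fun _ : ℕ => ℂ) 2) : ℕ → ℂ) n = b n + b' n := by
      intro n; rw [lp.coeFn_add]; rfl
    show TFun Q (b + b') j = TFun Q b j + TFun Q b' j
    simp only [TFun, hco]
    rw [← mul_add, ← Finset.sum_add_distrib]
    congr 1
    apply Finset.sum_congr rfl
    intro k _
    rw [add_div, mul_add]
  map_smul' c b := by
    apply Subtype.ext
    funext j
    have hco : ∀ n, ((c • b : lp (fun _ : ℕ => ℂ) 2) : ℕ → ℂ) n = c * b n := by
      intro n; rw [lp.coeFn_smul]; rfl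
    show TFun Q (c • b) j = c * TFun Q b j
    simp only [TFun, hco]
    rw [Finset.mul_sum, Finset.mul_sum, Finset.mul_sum]
    apply Finset.sum_congr rfl
    intro k _
    field_simp

lemma coord_tendsto {v : ℕ → lp (fun _ : ℕ => ℂ) 2} {l : lp (fun _ : ℕ => ℂ) 2}
    (h : Filter.Tendsto v Filter.atTop (nhds l)) (j : ℕ) :
    Filter.Tendsto (fun k => (v k : ℕ → ℂ) j) Filter.atTop (nhds ((l : ℕ → ℂ) j)) := by
  rw [tendsto_iff_norm_sub_tendsto_zero] at h ⊢
  apply squeeze_zero (fun k => norm_nonneg _) (fun k => ?_) h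
  have h2 := lp.norm_apply_le_norm two_ne_zero (v k - l) j
  rwa [lp.coeFn_sub, Pi.sub_apply] at h2

noncomputable def TQ (hQ : IsMultiplier Q) :
    lp (fun _ : ℕ => ℂ) 2 →L[ℂ] lp (fun _ : ℕ => ℂ) 2 :=
  ContinuousLinearMap.ofSeqClosedGraph (g := TopMap Q hQ) (by
    intro u x y hux huy
    apply Subtype.ext
    funext j
    have h1 : Filter.Tendsto (fun k => TFun Q (u k) j) Filter.atTop
        (nhds ((y : ℕ → ℂ) j)) := coord_tendsto huy j
    have h3 : Filter.Tendsto (fun k => TFun Q (u k) j) Filter.atTop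
        (nhds (TFun Q x j)) := by
      unfold TFun
      apply Filter.Tendsto.const_mul
      apply tendsto_finset_sum
      intro i _
      exact Filter.Tendsto.const_mul _ (Filter.Tendsto.div_const (coord_tendsto hux (j-i)) _)
    exact tendsto_nhds_unique h1 h3)

lemma mult_bound (hQ : IsMultiplier Q) :
    ∀ f, MemDirichlet f →
      dirNormSq (fun z => Q z * f z) ≤ ‖TQ Q hQ‖^2 * dirNormSq f := by
  intro f hf
  have hmem : Memℓp (fun n : ℕ => sqf n * dirCoeff f n) 2 := by
    rw [memlp_iff]
    apply Summable.congr hf.2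
    intro n
    rw [norm_mul_sqf_sq]
  set b : lp (fun _ : ℕ => ℂ) 2 := ⟨fun n : ℕ => sqf n * dirCoeff f n, hmem⟩ with hbdef
  have hco : ∀ n, dirCoeff f n = (b : ℕ → ℂ) n / sqf n := by
    intro n
    show dirCoeff f n = (sqf n * dirCoeff f n) / sqf n
    rw [mul_comm, mul_div_assoc, div_self (sqf_ne n), mul_one]
  have hT : ∀ j, ((TQ Q hQ b : lp (fun _ : ℕ => ℂ) 2) : ℕ → ℂ) j
      = sqf j * dirCoeff (fun z => Q z * f z) j := by
    intro j
    exact TFun_eq Q hQ.1 hf.1 hco j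
  have h1 : dirNormSq (fun z => Q z * f z) = ‖TQ Q hQ b‖^2 := by
    rw [lp_norm_sq]
    apply tsum_congr
    intro j
    rw [hT j, norm_mul_sqf_sq]
  have h2 : ‖b‖^2 = dirNormSq f := by
    rw [lp_norm_sq]
    apply tsum_congr
    intro n
    show ‖sqf n * dirCoeff f n‖^2 = _
    rw [norm_mul_sqf_sq]
  rw [h1, ← h2]
  have h3 := (TQ Q hQ).le_opNorm b
  calc ‖TQ Q hQ b‖^2 ≤ (‖TQ Q hQ‖ * ‖b‖)^2 :=
        pow_le_pow_left₀ (norm_nonneg _) h3 2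
    _ = ‖TQ Q hQ‖^2 * ‖b‖^2 := by ring

end Graph

section One

lemma dirCoeff_one (n : ℕ) :
    dirCoeff (fun _ : ℂ => (1:ℂ)) n = if n = 0 then 1 else 0 := by
  apply dirCoeff_eq_of_hasSum (differentiableOn_const 1) _ n
  intro z hz
  have h := hasSum_ite_eq (0:ℕ) (1:ℂ)
  convert h using 2 with m
  by_cases hm : m = 0 <;> simp [hm]

lemma memOne : MemDirichlet (fun _ : ℂ => (1:ℂ)) := by
  refine ⟨differentiableOn_const _, ?_⟩
  apply summable_of_ne_finset_zero (s := ({0} : Finset ℕ))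
  intro n hn
  simp only [Finset.mem_singleton] at hn
  rw [dirCoeff_one, if_neg hn]
  simp

lemma dirNormSq_one : dirNormSq (fun _ : ℂ => (1:ℂ)) = 1 := by
  unfold dirNormSq
  rw [tsum_eq_single 0]
  · rw [dirCoeff_one]; simp
  · intro n hn; rw [dirCoeff_one, if_neg hn]; simp

end One

/-- Lemma 4: for a multiplier `Q` of the Dirichlet space,
`(1 − |z|²)|Q'(z)| ≤ ‖M_Q‖` on the unit disk. -/
theorem multiplier_deriv_bound (Q : ℂ → ℂ) (hQ : IsMultiplier Q) :
    ∀ z ∈ ball (0:ℂ) 1, (1 - ‖z‖ ^ 2) * ‖deriv Q z‖ ≤ multNorm Q := by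
  intro z hz
  have e : (fun z => Q z * (fun _ : ℂ => (1:ℂ)) z) = Q := funext fun z => mul_one _
  have hQmem : MemDirichlet Q := by
    have := hQ.2 _ memOne
    rwa [e] at this
  have hnonempty : {C : ℝ | 0 ≤ C ∧ ∀ f, MemDirichlet f →
      dirNormSq (fun z => Q z * f z) ≤ C ^ 2 * dirNormSq f}.Nonempty :=
    ⟨‖TQ Q hQ‖, norm_nonneg _, mult_bound Q hQ⟩
  unfold multNorm
  apply le_csInf hnonempty
  rintro C ⟨hC0, hCb⟩
  have hQn : dirNormSq Q ≤ C^2 := by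
    have := hCb _ memOne
    rw [dirNormSq_one, mul_one, e] at this
    exact this
  calc (1 - ‖z‖^2) * ‖deriv Q z‖ ≤ Real.sqrt (dirNormSq Q) :=
        dirDerivBound hQmem.1 hQmem.2 hz
    _ ≤ Real.sqrt (C^2) := Real.sqrt_le_sqrt hQn
    _ = C := by rw [Real.sqrt_sq hC0]
end
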